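/- arXiv:1403.6741 — 6 statements merged into one kernel-verified Lean document; each statement's English description precedes it below -/
import Mathlib

section
/- Let z be a vector of n i.i.d. rate-1 exponential random variables, A an m×n real matrix, and b ∈ R^m. Suppose there is a row r and a column i with A_{r,i} > 0, A_{r,j} = 0 for all j ≠ i, and b_r ≥ 0. Then P(Az > b componentwise) = e^{-b_r/A_{r,i}} · P(A' z' > b' − (b_r/A_{r,i}) a', where A' is A with row r deleted, b' is b with entry r deleted, a' is the i-th column of A with its r-th entry deleted, and z' has the same distribution as z). -/
open MeasureTheory ProbabilityTheory Real

/-- The product measure of `n` i.i.d. rate-1 exponential random variables. -/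
noncomputable def iidExp (ι : Type*) [Fintype ι] : Measure (ι → ℝ) :=
  haveI : IsProbabilityMeasure (expMeasure 1) := isProbabilityMeasure_expMeasure one_pos
  Measure.pi fun _ => expMeasure 1

lemma exp_lint_inter (A : Set ℝ) (hA : MeasurableSet A) :
    ∫⁻ x in A, exponentialPDF 1 x = ∫⁻ x in A ∩ Set.Ioi 0, exponentialPDF 1 x := by
  rw [← lintegral_indicator hA, ← lintegral_indicator (hA.inter measurableSet_Ioi)]
  refine lintegral_congr_ae ?_
  have h0 : ∀ᵐ (x : ℝ), x ≠ (0 : ℝ) := by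
    rw [ae_iff]; simpa using measure_singleton (0 : ℝ)
  classical
  filter_upwards [h0] with x hx
  rw [Set.indicator_apply, Set.indicator_apply]
  rcases hx.lt_or_gt with h | h
  · simp [Set.mem_Ioi, not_lt.2 h.le, exponentialPDF_of_neg h]
  · simp [Set.mem_Ioi, h]

lemma expMeasure_restrict_Ioi (c : ℝ) (hc : 0 ≤ c) :
    (expMeasure 1).restrict (Set.Ioi c)
      = ENNReal.ofReal (Real.exp (-c)) • (expMeasure 1).map (· + c) := by
  have hmble : Measurable fun x : ℝ => x + c := measurable_add_const c
  ext s hs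
  rw [Measure.restrict_apply hs, Measure.smul_apply, Measure.map_apply hmble hs, smul_eq_mul]
  have hexp : expMeasure 1 = volume.withDensity (exponentialPDF 1) := rfl
  rw [hexp, withDensity_apply _ (hs.inter measurableSet_Ioi),
    withDensity_apply _ (hmble hs)]
  have hmp : MeasurePreserving (fun x : ℝ => x + c) volume volume :=
    measurePreserving_add_right volume c
  have hemb : MeasurableEmbedding (fun x : ℝ => x + c) :=
    (MeasurableEquiv.addRight c).measurableEmbedding
  rw [← hmp.setLIntegral_comp_preimage_emb hemb (exponentialPDF 1) (s ∩ Set.Ioi c)]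
  have hpre : (fun x : ℝ => x + c) ⁻¹' (s ∩ Set.Ioi c)
      = ((fun x : ℝ => x + c) ⁻¹' s) ∩ Set.Ioi 0 := by
    ext x; simp [Set.mem_Ioi, lt_add_iff_pos_left]
  rw [hpre, exp_lint_inter _ (hmble hs)]
  rw [← lintegral_const_mul' _ _ ENNReal.ofReal_ne_top]
  refine setLIntegral_congr_fun (((hmble hs).inter measurableSet_Ioi)) ?_
  refine fun x hx => show exponentialPDF 1 (x + c) = ENNReal.ofReal (rexp (-c)) * exponentialPDF 1 x from ?_
  have hx0 : 0 < x := hx.2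
  rw [exponentialPDF_of_nonneg (by linarith : (0:ℝ) ≤ x + c),
    exponentialPDF_of_nonneg hx0.le, ← ENNReal.ofReal_mul (exp_nonneg _)]
  congr 1
  rw [one_mul, one_mul, one_mul, ← Real.exp_add]
  ring_nf

lemma iidExp_restrict_shift {ι : Type*} [Fintype ι] [DecidableEq ι] (i : ι) (c : ℝ) (hc : 0 ≤ c) :
    (iidExp ι).restrict {z | c < z i}
      = ENNReal.ofReal (Real.exp (-c)) •
        (iidExp ι).map (fun z j => if j = i then z j + c else z j) := by
  haveI : IsProbabilityMeasure (expMeasure 1) := isProbabilityMeasure_expMeasure one_pos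
  have hfun : ∀ j : ι, (fun z : ι → ℝ => if j = i then z j + c else z j)
      = fun z => z j + (if j = i then c else 0) := by
    intro j; funext z; split <;> simp
  have hT : Measurable (fun z : ι → ℝ => fun j => if j = i then z j + c else z j) := by
    refine measurable_pi_lambda _ fun j => ?_
    rw [hfun j]
    exact (measurable_pi_apply j).add_const _
  haveI hsf : ∀ j : ι, SigmaFinite
      ((fun j => if j = i then (expMeasure 1).restrict (Set.Ioi c) else expMeasure 1) j) := by
    intro j
    by_cases hj : j = i
    · simp only [if_pos hj]; infer_instance
    · simp only [if_neg hj]; infer_instance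
  have h1 : (iidExp ι).restrict {z | c < z i}
      = Measure.pi (fun j => if j = i then (expMeasure 1).restrict (Set.Ioi c)
          else expMeasure 1) := by
    refine (Measure.pi_eq fun s hs => ?_).symm
    rw [Measure.restrict_apply (MeasurableSet.univ_pi hs)]
    have hset : Set.univ.pi s ∩ {z | c < z i}
        = Set.univ.pi (fun j => if j = i then s i ∩ Set.Ioi c else s j) := by
      ext z
      simp only [Set.mem_inter_iff, Set.mem_pi, Set.mem_univ, true_implies, Set.mem_setOf_eq]
      constructor
      · rintro ⟨h1, h2⟩ j
        by_cases hj : j = i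
        · subst hj; simpa using ⟨h1 j, h2⟩
        · simpa [hj] using h1 j
      · intro h
        refine ⟨fun j => ?_, ?_⟩
        · by_cases hj : j = i
          · subst hj; have := h j; simp only [if_pos rfl] at this; exact this.1
          · simpa [hj] using h j
        · have := h i; simp only [if_pos rfl] at this; exact this.2
    rw [hset, show iidExp ι = Measure.pi fun _ => expMeasure 1 from rfl, Measure.pi_pi]
    refine Finset.prod_congr rfl fun j _ => ?_
    by_cases hj : j = i
    · subst hj
      simp only [if_pos rfl, if_true]
      rw [Measure.restrict_apply (hs j)]
    · simp only [if_neg hj]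
  have h2 : Measure.pi (fun j => if j = i then (expMeasure 1).restrict (Set.Ioi c)
        else expMeasure 1)
      = ENNReal.ofReal (Real.exp (-c)) •
        (iidExp ι).map (fun z j => if j = i then z j + c else z j) := by
    refine Measure.pi_eq fun s hs => ?_
    rw [Measure.smul_apply, Measure.map_apply hT (MeasurableSet.univ_pi hs), smul_eq_mul]
    have hpre : (fun z : ι → ℝ => fun j => if j = i then z j + c else z j) ⁻¹' (Set.univ.pi s)
        = Set.univ.pi (fun j => if j = i then (fun x => x + c) ⁻¹' (s i) else s j) := by
      ext z
      simp only [Set.mem_preimage, Set.mem_pi, Set.mem_univ, true_implies]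
      refine forall_congr' fun j => ?_
      by_cases hj : j = i
      · subst hj; simp
      · simp [hj]
    rw [hpre, show iidExp ι = Measure.pi fun _ => expMeasure 1 from rfl, Measure.pi_pi]
    rw [← Finset.mul_prod_erase Finset.univ _ (Finset.mem_univ i),
      ← Finset.mul_prod_erase Finset.univ
        (fun j => (if j = i then (expMeasure 1).restrict (Set.Ioi c) else expMeasure 1) (s j))
        (Finset.mem_univ i),
      ← mul_assoc]
    congr 1
    · simp only [if_pos rfl, if_true]
      rw [expMeasure_restrict_Ioi c hc, Measure.smul_apply,
        Measure.map_apply (measurable_add_const c) (hs i), smul_eq_mul]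
    · refine Finset.prod_congr rfl fun j hj => ?_
      have hji : j ≠ i := (Finset.mem_erase.mp hj).1
      simp only [if_neg hji]
  rw [h1, h2]

/-- Memoryless elimination of a row with a single nonzero (positive) entry:
$P(Az > b) = e^{-b_r/A_{r,i}} P(A' z > b' - (b_r/A_{r,i}) a')$ where $A', b', a'$ are obtained
by deleting row $r$ (and $a'$ is the $i$-th column of $A$ with entry $r$ deleted). -/
theorem row_elimination (m n : ℕ) (A : Matrix (Fin (m + 1)) (Fin n) ℝ) (b : Fin (m + 1) → ℝ)
    (r : Fin (m + 1)) (i : Fin n) (hpos : 0 < A r i) (hzero : ∀ j, j ≠ i → A r j = 0)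
    (hb : 0 ≤ b r) :
    iidExp (Fin n) {z | ∀ k, b k < A.mulVec z k}
      = ENNReal.ofReal (Real.exp (-(b r / A r i)))
        * iidExp (Fin n) {z | ∀ k : Fin m,
            b (r.succAbove k) - (b r / A r i) * A (r.succAbove k) i
              < (A.submatrix r.succAbove id).mulVec z k} := by
  set c : ℝ := b r / A r i with hc_def
  have hc : 0 ≤ c := div_nonneg hb hpos.le
  set C : Set (Fin n → ℝ) :=
    {z | ∀ k : Fin m, b (r.succAbove k) < (A.submatrix r.succAbove id).mulVec z k} with hC_def
  have hC : MeasurableSet C := by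
    have : C = ⋂ k : Fin m,
        {z : Fin n → ℝ | b (r.succAbove k) < (A.submatrix r.succAbove id).mulVec z k} := by
      ext z; simp [hC_def, Set.mem_iInter]
    rw [this]
    refine MeasurableSet.iInter fun k => ?_
    refine measurableSet_lt measurable_const ?_
    have : (fun z : Fin n → ℝ => (A.submatrix r.succAbove id).mulVec z k)
        = fun z => ∑ j, A (r.succAbove k) j * z j := rfl
    rw [this]
    exact Finset.measurable_sum _ fun j _ => (measurable_pi_apply j).const_mul _
  have hT : Measurable (fun z : Fin n → ℝ => fun j => if j = i then z j + c else z j) := by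
    refine measurable_pi_lambda _ fun j => ?_
    have : (fun z : Fin n → ℝ => if j = i then z j + c else z j)
        = fun z => z j + (if j = i then c else 0) := by
      funext z; split <;> simp
    rw [this]
    exact (measurable_pi_apply j).add_const _
  have hL : {z : Fin n → ℝ | ∀ k, b k < A.mulVec z k} = {z | c < z i} ∩ C := by
    ext z
    simp only [Set.mem_setOf_eq, Set.mem_inter_iff, hC_def]
    rw [Fin.forall_iff_succAbove r]
    have hrow : A.mulVec z r = A r i * z i := by
      show ∑ j, A r j * z j = A r i * z i
      refine Finset.sum_eq_single i (fun j _ hj => by rw [hzero j hj, zero_mul])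
        (fun h => absurd (Finset.mem_univ i) h)
    refine and_congr ?_ Iff.rfl
    rw [hrow, mul_comm]
    exact (div_lt_iff₀ hpos).symm
  have hR : {z : Fin n → ℝ | ∀ k : Fin m,
        b (r.succAbove k) - c * A (r.succAbove k) i
          < (A.submatrix r.succAbove id).mulVec z k}
      = (fun z : Fin n → ℝ => fun j => if j = i then z j + c else z j) ⁻¹' C := by
    ext z
    simp only [Set.mem_setOf_eq, Set.mem_preimage, hC_def]
    refine forall_congr' fun k => ?_
    have hshift : (A.submatrix r.succAbove id).mulVec
          (fun j => if j = i then z j + c else z j) k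
        = (A.submatrix r.succAbove id).mulVec z k + c * A (r.succAbove k) i := by
      show (∑ j, A (r.succAbove k) j * (if j = i then z j + c else z j))
        = (∑ j, A (r.succAbove k) j * z j) + c * A (r.succAbove k) i
      have : ∀ j, A (r.succAbove k) j * (if j = i then z j + c else z j)
          = A (r.succAbove k) j * z j + (if j = i then A (r.succAbove k) i * c else 0) := by
        intro j
        split
        · next h => subst h; ring
        · next h => ring_nf
      rw [Finset.sum_congr rfl fun j _ => this j, Finset.sum_add_distrib,
        Finset.sum_ite_eq' Finset.univ i (fun _ => A (r.succAbove k) i * c)]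
      simp [mul_comm]
    rw [hshift]
    constructor <;> intro h <;> linarith
  have step1 : iidExp (Fin n) ({z | c < z i} ∩ C) = (iidExp (Fin n)).restrict {z | c < z i} C := by
    rw [Measure.restrict_apply hC, Set.inter_comm]
  rw [hL, hR, step1, iidExp_restrict_shift i c hc, Measure.smul_apply,
    Measure.map_apply hT hC, smul_eq_mul]
end

section
/- For a Rayleigh fading MAC with 2 i.i.d. links, the non-outage probability equals e^{-λ(2^{r_1+r_2}−1)} · (1 + λ(2^{r_1}−1)(2^{r_2}−1)), where λ > 0 and r_1, r_2 ≥ 0. Formally: if z_1, z_2 are i.i.d. rate-1 exponentials, then P(z_1 ≥ λ(2^{r_1}−1), z_2 ≥ λ(2^{r_2}−1), z_1 + z_2 ≥ λ(2^{r_1+r_2}−1)) = e^{-λ(2^{r_1+r_2}−1)}(1 + λ(2^{r_1}−1)(2^{r_2}−1)). -/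
open MeasureTheory ProbabilityTheory Real

lemma lint_exp_tail (t : ℝ) :
    ∫⁻ x in Set.Ioi t, ENNReal.ofReal (Real.exp (-x)) = ENNReal.ofReal (Real.exp (-t)) := by
  rw [← ofReal_integral_eq_lintegral_ofReal]
  · rw [integral_exp_neg_Ioi]
  · exact (by simpa using exp_neg_integrableOn_Ioi t one_pos : IntegrableOn (fun x : ℝ => Real.exp (-x)) (Set.Ioi t))
  · filter_upwards with x using (Real.exp_pos _).le

lemma lint_exp_tail_Ici (t : ℝ) :
    ∫⁻ x in Set.Ici t, ENNReal.ofReal (Real.exp (-x)) = ENNReal.ofReal (Real.exp (-t)) := by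
  rw [← lint_exp_tail t]
  exact setLIntegral_congr (Ioi_ae_eq_Ici (μ := volume)).symm

lemma expMeasure_tail {t : ℝ} (ht : 0 ≤ t) :
    expMeasure 1 (Set.Ici t) = ENNReal.ofReal (Real.exp (-t)) := by
  rw [expMeasure, gammaMeasure, withDensity_apply _ measurableSet_Ici]
  rw [← lint_exp_tail_Ici t]
  refine setLIntegral_congr_fun measurableSet_Ici ?_
  intro x hx
  rw [show gammaPDF 1 1 x = exponentialPDF 1 x from rfl,
    exponentialPDF_of_nonneg (ht.trans hx)]
  norm_num

/-- Exact non-outage probability of a 2-link i.i.d. Rayleigh MAC. -/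
theorem mac2_nonoutage (lam r1 r2 : ℝ) (hlam : 0 < lam) (hr1 : 0 ≤ r1) (hr2 : 0 ≤ r2) :
    iidExp (Fin 2) {z | lam * ((2 : ℝ) ^ r1 - 1) ≤ z 0 ∧ lam * ((2 : ℝ) ^ r2 - 1) ≤ z 1 ∧
        lam * ((2 : ℝ) ^ (r1 + r2) - 1) ≤ z 0 + z 1}
      = ENNReal.ofReal (Real.exp (-(lam * ((2 : ℝ) ^ (r1 + r2) - 1)))
          * (1 + lam * ((2 : ℝ) ^ r1 - 1) * ((2 : ℝ) ^ r2 - 1))) := by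
  haveI : IsProbabilityMeasure (expMeasure 1) := isProbabilityMeasure_expMeasure one_pos
  set a := lam * ((2 : ℝ) ^ r1 - 1) with ha_def
  set b := lam * ((2 : ℝ) ^ r2 - 1) with hb_def
  set c := lam * ((2 : ℝ) ^ (r1 + r2) - 1) with hc_def
  have h2 : (1:ℝ) ≤ 2 := one_le_two
  have h1r1 : (1:ℝ) ≤ 2 ^ r1 := by
    simpa using Real.rpow_le_rpow_of_exponent_le h2 hr1
  have h1r2 : (1:ℝ) ≤ 2 ^ r2 := by
    simpa using Real.rpow_le_rpow_of_exponent_le h2 hr2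
  have ha : 0 ≤ a := mul_nonneg hlam.le (by linarith)
  have hb : 0 ≤ b := mul_nonneg hlam.le (by linarith)
  have hcab : c = a + b + lam * ((2:ℝ) ^ r1 - 1) * ((2:ℝ) ^ r2 - 1) := by
    rw [ha_def, hb_def, hc_def, Real.rpow_add two_pos]; ring
  have hprod : 0 ≤ lam * ((2:ℝ) ^ r1 - 1) * ((2:ℝ) ^ r2 - 1) :=
    mul_nonneg (mul_nonneg hlam.le (by linarith)) (by linarith)
  have habc : a + b ≤ c := by linarith
  have hacb : a ≤ c - b := by linarith
  -- step 1: reduce to product measure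
  set μ := expMeasure 1 with hμ
  set S' : Set (ℝ × ℝ) := {p : ℝ × ℝ | a ≤ p.1 ∧ b ≤ p.2 ∧ c ≤ p.1 + p.2} with hS'
  have hS'meas : MeasurableSet S' := by
    apply MeasurableSet.inter (measurableSet_le measurable_const measurable_fst)
    exact MeasurableSet.inter (measurableSet_le measurable_const measurable_snd)
      (measurableSet_le measurable_const (measurable_fst.add measurable_snd))
  have hstep1 : iidExp (Fin 2) {z | a ≤ z 0 ∧ b ≤ z 1 ∧ c ≤ z 0 + z 1} = μ.prod μ S' := by
    rw [iidExp, ← (measurePreserving_finTwoArrow μ).measure_preimage hS'meas.nullMeasurableSet]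
    rfl
  rw [hstep1]
  -- step 2: slice
  have hslice : ∀ x : ℝ, μ (Prod.mk x ⁻¹' S')
      = Set.indicator (Set.Ici a) (fun x => ENNReal.ofReal (Real.exp (-(max b (c - x))))) x := by
    intro x
    by_cases hx : a ≤ x
    · rw [Set.indicator_of_mem (Set.mem_Ici.mpr hx)]
      have : Prod.mk x ⁻¹' S' = Set.Ici (max b (c - x)) := by
        ext y
        simp only [hS', Set.mem_preimage, Set.mem_setOf_eq, Set.mem_Ici, max_le_iff]
        constructor
        · rintro ⟨_, h1, h2⟩; exact ⟨h1, by linarith⟩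
        · rintro ⟨h1, h2⟩; exact ⟨hx, h1, by linarith⟩
      rw [this, expMeasure_tail (le_max_of_le_left hb)]
    · rw [Set.indicator_of_notMem (fun h => hx (Set.mem_Ici.mp h))]
      have : Prod.mk x ⁻¹' S' = ∅ := by
        ext y; simp only [hS', Set.mem_preimage, Set.mem_setOf_eq, Set.mem_empty_iff_false,
          iff_false]
        rintro ⟨h1, -, -⟩; exact hx h1
      rw [this, measure_empty]
  have hstep2 : μ.prod μ S'
      = ∫⁻ x in Set.Ici a, ENNReal.ofReal (Real.exp (-(max b (c - x)))) ∂μ := by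
    rw [Measure.prod_apply hS'meas]
    rw [lintegral_congr hslice, lintegral_indicator measurableSet_Ici _]
  rw [hstep2]
  -- step 3: to Lebesgue integral with density
  have hstep3 : ∫⁻ x in Set.Ici a, ENNReal.ofReal (Real.exp (-(max b (c - x)))) ∂μ
      = ∫⁻ x in Set.Ici a, ENNReal.ofReal (Real.exp (-x) * Real.exp (-(max b (c - x)))) := by
    rw [hμ, expMeasure, gammaMeasure, restrict_withDensity measurableSet_Ici,
      lintegral_withDensity_eq_lintegral_mul]
    · refine setLIntegral_congr_fun measurableSet_Ici ?_
      intro x hx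
      simp only [Pi.mul_apply]
      rw [show gammaPDF 1 1 x = exponentialPDF 1 x from rfl,
        exponentialPDF_of_nonneg (ha.trans hx), ← ENNReal.ofReal_mul (by positivity)]
      norm_num
    · exact (measurable_gammaPDFReal 1 1).ennreal_ofReal
    · exact ((measurable_const.max (measurable_const.sub measurable_id)).neg.exp).ennreal_ofReal
  rw [hstep3]
  have hd : c - b - a = lam * ((2:ℝ) ^ r1 - 1) * ((2:ℝ) ^ r2 - 1) := by linarith
  have hdisj : Disjoint (Set.Ico a (c - b)) (Set.Ici (c - b)) := by
    rw [Set.disjoint_left]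
    rintro x ⟨-, h1⟩ h2
    exact absurd h2 (not_le.mpr h1)
  rw [show Set.Ici a = Set.Ico a (c - b) ∪ Set.Ici (c - b) from
    (Set.Ico_union_Ici_eq_Ici hacb).symm,
    lintegral_union measurableSet_Ici hdisj]
  have hI1 : ∫⁻ x in Set.Ico a (c - b),
      ENNReal.ofReal (Real.exp (-x) * Real.exp (-(max b (c - x))))
      = ENNReal.ofReal (Real.exp (-c) * (c - b - a)) := by
    rw [setLIntegral_congr_fun (g := fun _ => ENNReal.ofReal (Real.exp (-c)))
      measurableSet_Ico ?_]
    · rw [lintegral_const, Measure.restrict_apply_univ, Real.volume_Ico,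
        ← ENNReal.ofReal_mul (Real.exp_pos _).le]
    · intro x hx
      dsimp only
      have hmax : max b (c - x) = c - x := max_eq_right (by linarith [hx.2])
      rw [hmax, ← Real.exp_add]
      ring_nf
  have hI2 : ∫⁻ x in Set.Ici (c - b),
      ENNReal.ofReal (Real.exp (-x) * Real.exp (-(max b (c - x))))
      = ENNReal.ofReal (Real.exp (-c)) := by
    rw [setLIntegral_congr_fun
      (g := fun x => ENNReal.ofReal (Real.exp (-b)) * ENNReal.ofReal (Real.exp (-x)))
      measurableSet_Ici ?_]
    · rw [lintegral_const_mul _ (measurable_neg.exp.ennreal_ofReal : Measurable fun x : ℝ => ENNReal.ofReal (Real.exp (-x))), lint_exp_tail_Ici,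
        ← ENNReal.ofReal_mul (Real.exp_pos _).le, ← Real.exp_add]
      ring_nf
    · intro x hx
      dsimp only
      have hmax : max b (c - x) = b := max_eq_left (by linarith [hx.out])
      rw [hmax, ← ENNReal.ofReal_mul (Real.exp_pos _).le, mul_comm]
  rw [hI1, hI2, ← ENNReal.ofReal_add (mul_nonneg (Real.exp_pos _).le (by linarith)) (Real.exp_pos _).le]
  congr 1
  rw [hd.symm]
  ring
end

section
/- For all λ > 0 and r_1, r_2 ≥ 0, if z_1, z_2 are i.i.d. rate-1 exponentials, then P(z_1 ≥ λ(2^{r_1}−1), z_2 ≥ λ(2^{r_2}−1), z_1 + z_2 ≥ λ(2^{r_1+r_2}−1)) ≥ e^{-λ(2^{r_1+r_2}−1)}. -/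
open MeasureTheory ProbabilityTheory Real

lemma expMeasure_Ici_lower (c : ℝ) (hc : 0 ≤ c) :
    ENNReal.ofReal (Real.exp (-c)) ≤ expMeasure 1 (Set.Ici c) := by
  haveI : IsProbabilityMeasure (expMeasure 1) := isProbabilityMeasure_expMeasure one_pos
  have hIic : expMeasure 1 (Set.Iic c) = ENNReal.ofReal (1 - Real.exp (-c)) := by
    rw [expMeasure, gammaMeasure, withDensity_apply _ measurableSet_Iic]
    have := lintegral_exponentialPDF_eq_antiDeriv one_pos c
    rw [if_pos hc, one_mul] at this
    simpa [exponentialPDF, gammaPDF, exponentialPDFReal] using this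
  have hcompl : expMeasure 1 (Set.Iic c)ᶜ = 1 - ENNReal.ofReal (1 - Real.exp (-c)) := by
    rw [measure_compl measurableSet_Iic (measure_ne_top _ _), hIic, measure_univ]
  have hsub : (Set.Iic c)ᶜ ⊆ Set.Ici c := by rw [Set.compl_Iic]; exact Set.Ioi_subset_Ici_self
  calc ENNReal.ofReal (Real.exp (-c))
      = 1 - ENNReal.ofReal (1 - Real.exp (-c)) := by
        have h1 : Real.exp (-c) ≤ 1 := Real.exp_le_one_iff.mpr (by linarith)
        rw [← ENNReal.ofReal_one, ← ENNReal.ofReal_sub _ (by linarith)]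
        norm_num
    _ = expMeasure 1 (Set.Iic c)ᶜ := hcompl.symm
    _ ≤ expMeasure 1 (Set.Ici c) := measure_mono hsub

/-- Weak lower bound on the 2-link MAC non-outage probability. -/
theorem mac2_nonoutage_lower (lam r1 r2 : ℝ) (hlam : 0 < lam) (hr1 : 0 ≤ r1) (hr2 : 0 ≤ r2) :
    ENNReal.ofReal (Real.exp (-(lam * ((2 : ℝ) ^ (r1 + r2) - 1))))
      ≤ iidExp (Fin 2) {z | lam * ((2 : ℝ) ^ r1 - 1) ≤ z 0 ∧ lam * ((2 : ℝ) ^ r2 - 1) ≤ z 1 ∧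
          lam * ((2 : ℝ) ^ (r1 + r2) - 1) ≤ z 0 + z 1} := by
  haveI : IsProbabilityMeasure (expMeasure 1) := isProbabilityMeasure_expMeasure one_pos
  set c1 : ℝ := lam * ((2 : ℝ) ^ r1 - 1) with hc1def
  set c2 : ℝ := lam * ((2 : ℝ) ^ (r1 + r2) - (2 : ℝ) ^ r1) with hc2def
  have h2r1 : (1 : ℝ) ≤ (2 : ℝ) ^ r1 := Real.one_le_rpow (by norm_num) hr1
  have h2r2 : (1 : ℝ) ≤ (2 : ℝ) ^ r2 := Real.one_le_rpow (by norm_num) hr2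
  have hadd : (2 : ℝ) ^ (r1 + r2) = (2 : ℝ) ^ r1 * (2 : ℝ) ^ r2 :=
    Real.rpow_add (by norm_num) r1 r2
  have hc1 : 0 ≤ c1 := by nlinarith
  have hc2 : 0 ≤ c2 := by nlinarith
  have hc2' : lam * ((2 : ℝ) ^ r2 - 1) ≤ c2 := by rw [hc2def, hadd]; nlinarith
  have hsum : c1 + c2 = lam * ((2 : ℝ) ^ (r1 + r2) - 1) := by ring
  have hsubset : (Set.univ.pi fun i : Fin 2 => Set.Ici (![c1, c2] i)) ⊆
      {z : Fin 2 → ℝ | lam * ((2 : ℝ) ^ r1 - 1) ≤ z 0 ∧ lam * ((2 : ℝ) ^ r2 - 1) ≤ z 1 ∧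
        lam * ((2 : ℝ) ^ (r1 + r2) - 1) ≤ z 0 + z 1} := by
    intro z hz
    have h0 : c1 ≤ z 0 := hz 0 trivial
    have h1 : c2 ≤ z 1 := hz 1 trivial
    exact ⟨h0, le_trans hc2' h1, by linarith⟩
  have hpi : iidExp (Fin 2) (Set.univ.pi fun i : Fin 2 => Set.Ici (![c1, c2] i))
      = ∏ i : Fin 2, expMeasure 1 (Set.Ici (![c1, c2] i)) := by
    rw [iidExp, Measure.pi_pi]
  calc ENNReal.ofReal (Real.exp (-(lam * ((2 : ℝ) ^ (r1 + r2) - 1))))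
      = ENNReal.ofReal (Real.exp (-c1)) * ENNReal.ofReal (Real.exp (-c2)) := by
        rw [← ENNReal.ofReal_mul (by positivity), ← Real.exp_add, ← hsum]; ring_nf
    _ ≤ ∏ i : Fin 2, expMeasure 1 (Set.Ici (![c1, c2] i)) := by
        rw [Fin.prod_univ_two]
        exact mul_le_mul' (by simpa using expMeasure_Ici_lower c1 hc1)
          (by simpa using expMeasure_Ici_lower c2 hc2)
    _ = iidExp (Fin 2) (Set.univ.pi fun i : Fin 2 => Set.Ici (![c1, c2] i)) := hpi.symm
    _ ≤ _ := measure_mono hsubset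
end

section
/- Let z_1, z_2, z_3 be i.i.d. rate-1 exponential random variables, λ > 0, and r_1, r_2, r_3 ≥ 0. Let R_3 = r_1 + r_2 + r_3 and α_3 = (2^{r_1}−1)(2^{r_2}−1)(2^{r_3}−1). Then the probability that all seven MAC inequalities hold, namely Σ_{i∈M} z_i ≥ λ(2^{Σ_{i∈M} r_i} − 1) for every nonempty M ⊆ {1,2,3}, is at least e^{-λ(2^{R_3}−1)} · (1 + λα_3 + (λα_3)^2/2). -/
open MeasureTheory ProbabilityTheory Real

section aux
open Set
open scoped ENNReal


lemma expInt {a : ℝ} : IntegrableOn (fun x => Real.exp (-x)) (Set.Ioi a) := by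
  simpa using exp_neg_integrableOn_Ioi a one_pos

lemma nu_restrict {c : ℝ} (hc : 0 ≤ c) (g : ℝ → ℝ≥0∞) (hg : Measurable g) :
    ∫⁻ y in Ici c, g y ∂(expMeasure 1)
      = ∫⁻ y in Ioi c, ENNReal.ofReal (Real.exp (-y)) * g y := by
  have hm : Measurable (gammaPDF 1 1) := by
    unfold gammaPDF; exact (measurable_gammaPDFReal 1 1).ennreal_ofReal
  rw [expMeasure, gammaMeasure, restrict_withDensity measurableSet_Ici,
    lintegral_withDensity_eq_lintegral_mul _ hm hg,
    ← Measure.restrict_congr_set Ioi_ae_eq_Ici]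
  refine setLIntegral_congr_fun measurableSet_Ioi (fun y hy => ?_)
  have h0 : (0:ℝ) ≤ y := le_of_lt (lt_of_le_of_lt hc hy)
  have : gammaPDF 1 1 y = ENNReal.ofReal (Real.exp (-y)) := by
    rw [show gammaPDF 1 1 y = exponentialPDF 1 y from rfl, exponentialPDF_of_nonneg h0]
    norm_num
  rw [Pi.mul_apply, this]

lemma nu_Ici {m : ℝ} (hm : 0 ≤ m) :
    expMeasure 1 (Ici m) = ENNReal.ofReal (Real.exp (-m)) := by
  have := nu_restrict hm (fun _ => 1) measurable_const
  simp only [lintegral_one, Measure.restrict_apply MeasurableSet.univ, univ_inter, mul_one] at this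
  rw [this, ← ofReal_integral_eq_lintegral_ofReal expInt
      (ae_of_all _ fun y => (Real.exp_pos _).le), integral_exp_neg_Ioi]

lemma stage2 (c b t : ℝ) :
    ∫ y in Ioi c, Real.exp (-y) * Real.exp (-max b (t - y)) =
      Real.exp (-(c + max b (t - c))) * (1 + max 0 (t - c - b)) := by
  rcases le_or_gt (t - c) b with h | h
  · have h1 : ∀ y ∈ Ioi c, Real.exp (-y) * Real.exp (-max b (t - y))
        = Real.exp (-b) * Real.exp (-y) := by
      intro y hy
      rw [max_eq_left (by simp only [mem_Ioi] at hy; linarith)]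
      ring
    rw [setIntegral_congr_fun measurableSet_Ioi h1, integral_const_mul, integral_exp_neg_Ioi,
      max_eq_left h, max_eq_left (by linarith : t - c - b ≤ 0), ← Real.exp_add]
    ring_nf
  · -- split at t - b
    have hcb : c < t - b := by linarith
    have hsplit : Ioc c (t - b) ∪ Ioi (t - b) = Ioi c := Ioc_union_Ioi_eq_Ioi hcb.le
    have hdisj : Disjoint (Ioc c (t - b)) (Ioi (t - b)) :=
      disjoint_left.mpr fun x hx hx2 => absurd hx.2 (not_le.mpr hx2)
    have e1 : ∀ y ∈ Ioc c (t - b), Real.exp (-y) * Real.exp (-max b (t - y))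
        = Real.exp (-t) := by
      intro y hy
      rw [max_eq_right (by simp only [mem_Ioc] at hy; linarith), ← Real.exp_add]
      ring_nf
    have e2 : ∀ y ∈ Ioi (t - b), Real.exp (-y) * Real.exp (-max b (t - y))
        = Real.exp (-b) * Real.exp (-y) := by
      intro y hy
      rw [max_eq_left (by simp only [mem_Ioi] at hy; linarith)]
      ring
    have i1 : IntegrableOn (fun y => Real.exp (-y) * Real.exp (-max b (t - y))) (Ioc c (t-b)) :=
      (integrableOn_congr_fun e1 measurableSet_Ioc).mpr (integrableOn_const measure_Ioc_lt_top.ne)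
    have i2 : IntegrableOn (fun y => Real.exp (-y) * Real.exp (-max b (t - y))) (Ioi (t-b)) :=
      (integrableOn_congr_fun e2 measurableSet_Ioi).mpr (expInt.const_mul _)
    rw [← hsplit, setIntegral_union hdisj measurableSet_Ioi i1 i2,
      setIntegral_congr_fun measurableSet_Ioc e1, setIntegral_congr_fun measurableSet_Ioi e2,
      setIntegral_const, integral_const_mul, integral_exp_neg_Ioi,
      max_eq_right h.le, max_eq_right (by linarith), Real.volume_real_Ioc_of_le hcb.le, ← Real.exp_add]
    rw [smul_eq_mul]
    have : -b + -(t - b) = -t := by ring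
    rw [this, show -(c + (t - c)) = -t by ring]
    ring
lemma stage3 (c1 c2 c3 xa : ℝ) (hxa : 0 ≤ xa) :
    IntegrableOn (fun x => Real.exp (-x) *
        (Real.exp (-(c2 + max c3 (c1 + c2 + c3 + xa - x - c2)))
          * (1 + max 0 (c1 + c2 + c3 + xa - x - c2 - c3)))) (Ioi c1) ∧
    ∫ x in Ioi c1, Real.exp (-x) *
        (Real.exp (-(c2 + max c3 (c1 + c2 + c3 + xa - x - c2)))
          * (1 + max 0 (c1 + c2 + c3 + xa - x - c2 - c3))) =
      Real.exp (-(c1 + c2 + c3 + xa)) * (1 + xa + xa ^ 2 / 2) := by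
  set C := c1 + c2 + c3 + xa with hC
  set f : ℝ → ℝ := fun x => Real.exp (-x) *
      (Real.exp (-(c2 + max c3 (C - x - c2))) * (1 + max 0 (C - x - c2 - c3))) with hf
  have hx0 : c1 ≤ c1 + xa := by linarith
  have hsplit : Ioc c1 (c1 + xa) ∪ Ioi (c1 + xa) = Ioi c1 := Ioc_union_Ioi_eq_Ioi hx0
  have hdisj : Disjoint (Ioc c1 (c1 + xa)) (Ioi (c1 + xa)) :=
    disjoint_left.mpr fun x hx hx2 => absurd hx.2 (not_le.mpr hx2)
  have e1 : ∀ x ∈ Ioc c1 (c1 + xa), f x = Real.exp (-C) * (1 + (c1 + xa - x)) := by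
    intro x hx
    simp only [mem_Ioc] at hx
    have h3 : Real.exp (-x) * Real.exp (-(c2 + max c3 (C - x - c2))) = Real.exp (-C) := by
      rw [max_eq_right (by simp only [hC]; linarith), ← Real.exp_add]
      congr 1; ring
    have h2 : max 0 (C - x - c2 - c3) = c1 + xa - x := by
      rw [max_eq_right (by simp only [hC]; linarith)]; simp only [hC]; ring
    simp only [hf, h2, ← mul_assoc, h3]
  have e2 : ∀ x ∈ Ioi (c1 + xa), f x = Real.exp (-(c2 + c3)) * Real.exp (-x) := by
    intro x hx
    simp only [mem_Ioi] at hx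
    have h1 : max c3 (C - x - c2) = c3 := max_eq_left (by simp only [hC]; linarith)
    have h2 : max 0 (C - x - c2 - c3) = 0 := max_eq_left (by simp only [hC]; linarith)
    simp only [hf, h1, h2]
    ring
  have i1 : IntegrableOn f (Ioc c1 (c1 + xa)) := by
    rw [integrableOn_congr_fun e1 measurableSet_Ioc]
    exact (intervalIntegrable_iff_integrableOn_Ioc_of_le hx0).mp
      (Continuous.intervalIntegrable (by continuity) _ _)
  have i2 : IntegrableOn f (Ioi (c1 + xa)) := by
    rw [integrableOn_congr_fun e2 measurableSet_Ioi]
    exact expInt.const_mul _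
  constructor
  · rw [← hsplit]; exact i1.union i2
  rw [← hsplit, setIntegral_union hdisj measurableSet_Ioi i1 i2,
    setIntegral_congr_fun measurableSet_Ioc e1, setIntegral_congr_fun measurableSet_Ioi e2,
    integral_const_mul, integral_const_mul, integral_exp_neg_Ioi]
  have key : ∫ x in Ioc c1 (c1 + xa), (1 + (c1 + xa - x)) = xa + xa ^ 2 / 2 := by
    rw [← intervalIntegral.integral_of_le hx0]
    have : ∀ x, (1 + (c1 + xa - x)) = (1 + c1 + xa) - x := fun x => by ring
    simp_rw [this]
    rw [intervalIntegral.integral_sub intervalIntegrable_const intervalIntegral.intervalIntegrable_id,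
      intervalIntegral.integral_const, integral_id, smul_eq_mul]
    ring
  rw [key, ← Real.exp_add]
  rw [show -(c2 + c3) + -(c1 + xa) = -C by simp only [hC]; ring]
  ring

lemma int2 (c b t : ℝ) :
    IntegrableOn (fun y => Real.exp (-y) * Real.exp (-max b (t - y))) (Ioi c) := by
  have hcont : Continuous fun y : ℝ => Real.exp (-y) * Real.exp (-max b (t - y)) :=
    (Real.continuous_exp.comp continuous_neg).mul
      (Real.continuous_exp.comp (continuous_const.max (continuous_const.sub continuous_id)).neg)
  refine Integrable.mono (expInt.const_mul (Real.exp (-b))) ?_ ?_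
  · exact hcont.aestronglyMeasurable.restrict
  · refine ae_of_all _ fun y => ?_
    have h1 : Real.exp (-max b (t - y)) ≤ Real.exp (-b) :=
      Real.exp_le_exp.2 (neg_le_neg (le_max_left _ _))
    have := Real.exp_pos (-y)
    rw [Real.norm_eq_abs, Real.norm_eq_abs, abs_of_nonneg (by positivity),
      abs_of_nonneg (by positivity)]
    calc Real.exp (-y) * Real.exp (-max b (t - y)) ≤ Real.exp (-y) * Real.exp (-b) := by nlinarith
      _ = Real.exp (-b) * Real.exp (-y) := by ring

lemma inner2 (c2 c3 t : ℝ) (h2 : 0 ≤ c2) (h3 : 0 ≤ c3) :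
    ((expMeasure 1).prod (expMeasure 1)) {q : ℝ × ℝ | c2 ≤ q.1 ∧ c3 ≤ q.2 ∧ t ≤ q.1 + q.2}
      = ENNReal.ofReal (Real.exp (-(c2 + max c3 (t - c2))) * (1 + max 0 (t - c2 - c3))) := by
  haveI : IsProbabilityMeasure (expMeasure 1) := isProbabilityMeasure_expMeasure one_pos
  have hms : MeasurableSet {q : ℝ × ℝ | c2 ≤ q.1 ∧ c3 ≤ q.2 ∧ t ≤ q.1 + q.2} := by
    apply MeasurableSet.inter
    · exact measurableSet_le measurable_const measurable_fst
    apply MeasurableSet.inter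
    · exact measurableSet_le measurable_const measurable_snd
    · exact measurableSet_le measurable_const (measurable_fst.add measurable_snd)
  rw [Measure.prod_apply hms]
  have hsl : ∀ y : ℝ, expMeasure 1 (Prod.mk y ⁻¹' {q : ℝ × ℝ | c2 ≤ q.1 ∧ c3 ≤ q.2 ∧ t ≤ q.1 + q.2})
      = (Ici c2).indicator (fun y => ENNReal.ofReal (Real.exp (-max c3 (t - y)))) y := by
    intro y
    by_cases hy : c2 ≤ y
    · have hset : Prod.mk y ⁻¹' {q : ℝ × ℝ | c2 ≤ q.1 ∧ c3 ≤ q.2 ∧ t ≤ q.1 + q.2}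
          = Ici (max c3 (t - y)) := by
        ext z
        simp only [mem_preimage, mem_setOf_eq, mem_Ici, max_le_iff, hy, true_and]
        constructor
        · rintro ⟨hz1, hz2⟩; exact ⟨hz1, by linarith⟩
        · rintro ⟨hz1, hz2⟩; exact ⟨hz1, by linarith⟩
      rw [hset, nu_Ici (le_trans h3 (le_max_left _ _)), indicator_of_mem (mem_Ici.2 hy)]
    · have hset : Prod.mk y ⁻¹' {q : ℝ × ℝ | c2 ≤ q.1 ∧ c3 ≤ q.2 ∧ t ≤ q.1 + q.2} = ∅ := by
        ext z; simp only [mem_preimage, mem_setOf_eq, mem_empty_iff_false, iff_false]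
        rintro ⟨h, -⟩; exact hy h
      rw [hset, measure_empty, indicator_of_notMem (by simpa using hy)]
  rw [lintegral_congr hsl, lintegral_indicator measurableSet_Ici _,
    nu_restrict h2 (fun y => ENNReal.ofReal (Real.exp (-max c3 (t - y)))) (by
      apply Measurable.ennreal_ofReal
      exact (Real.continuous_exp.comp
        (continuous_const.max (continuous_const.sub continuous_id)).neg).measurable)]
  have : ∀ y ∈ Ioi c2, ENNReal.ofReal (Real.exp (-y)) * ENNReal.ofReal (Real.exp (-max c3 (t - y)))
      = ENNReal.ofReal (Real.exp (-y) * Real.exp (-max c3 (t - y))) :=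
    fun y _ => (ENNReal.ofReal_mul (Real.exp_pos _).le).symm
  rw [setLIntegral_congr_fun measurableSet_Ioi this,
    ← ofReal_integral_eq_lintegral_ofReal (int2 c2 c3 t)
      (ae_of_all _ fun y => by positivity), stage2]

lemma prodcalc (c1 c2 c3 xa : ℝ) (h1 : 0 ≤ c1) (h2 : 0 ≤ c2) (h3 : 0 ≤ c3) (hxa : 0 ≤ xa) :
    ((expMeasure 1).prod ((expMeasure 1).prod (expMeasure 1)))
        {p : ℝ × ℝ × ℝ | c1 ≤ p.1 ∧ c2 ≤ p.2.1 ∧ c3 ≤ p.2.2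
          ∧ c1 + c2 + c3 + xa ≤ p.1 + p.2.1 + p.2.2}
      = ENNReal.ofReal (Real.exp (-(c1 + c2 + c3 + xa)) * (1 + xa + xa ^ 2 / 2)) := by
  haveI : IsProbabilityMeasure (expMeasure 1) := isProbabilityMeasure_expMeasure one_pos
  set C := c1 + c2 + c3 + xa with hC
  have hms : MeasurableSet {p : ℝ × ℝ × ℝ | c1 ≤ p.1 ∧ c2 ≤ p.2.1 ∧ c3 ≤ p.2.2
      ∧ C ≤ p.1 + p.2.1 + p.2.2} := by
    apply MeasurableSet.inter
    · exact measurableSet_le measurable_const measurable_fst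
    apply MeasurableSet.inter
    · exact measurableSet_le measurable_const (measurable_fst.comp measurable_snd)
    apply MeasurableSet.inter
    · exact measurableSet_le measurable_const (measurable_snd.comp measurable_snd)
    · exact measurableSet_le measurable_const
        ((measurable_fst.add (measurable_fst.comp measurable_snd)).add
          (measurable_snd.comp measurable_snd))
  rw [Measure.prod_apply hms]
  set g : ℝ → ℝ := fun x => Real.exp (-(c2 + max c3 (C - x - c2))) * (1 + max 0 (C - x - c2 - c3))
    with hg
  have hsl : ∀ x : ℝ, ((expMeasure 1).prod (expMeasure 1))
        (Prod.mk x ⁻¹' {p : ℝ × ℝ × ℝ | c1 ≤ p.1 ∧ c2 ≤ p.2.1 ∧ c3 ≤ p.2.2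
          ∧ C ≤ p.1 + p.2.1 + p.2.2})
      = (Ici c1).indicator (fun x => ENNReal.ofReal (g x)) x := by
    intro x
    by_cases hx : c1 ≤ x
    · have hset : Prod.mk x ⁻¹' {p : ℝ × ℝ × ℝ | c1 ≤ p.1 ∧ c2 ≤ p.2.1 ∧ c3 ≤ p.2.2
            ∧ C ≤ p.1 + p.2.1 + p.2.2}
          = {q : ℝ × ℝ | c2 ≤ q.1 ∧ c3 ≤ q.2 ∧ (C - x) ≤ q.1 + q.2} := by
        ext q
        simp only [mem_preimage, mem_setOf_eq, hx, true_and]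
        constructor
        · rintro ⟨hq1, hq2, hq3⟩; exact ⟨hq1, hq2, by linarith⟩
        · rintro ⟨hq1, hq2, hq3⟩; exact ⟨hq1, hq2, by linarith⟩
      rw [hset, inner2 c2 c3 (C - x) h2 h3, indicator_of_mem (mem_Ici.2 hx), hg]
    · have hset : Prod.mk x ⁻¹' {p : ℝ × ℝ × ℝ | c1 ≤ p.1 ∧ c2 ≤ p.2.1 ∧ c3 ≤ p.2.2
            ∧ C ≤ p.1 + p.2.1 + p.2.2} = ∅ := by
        ext q; simp only [mem_preimage, mem_setOf_eq, mem_empty_iff_false, iff_false]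
        rintro ⟨h, -⟩; exact hx h
      rw [hset, measure_empty, indicator_of_notMem (by simpa using hx)]
  have hgm : Measurable fun x => ENNReal.ofReal (g x) := by
    apply Measurable.ennreal_ofReal
    apply Continuous.measurable
    apply Continuous.mul
    · exact Real.continuous_exp.comp (continuous_const.add
        (continuous_const.max ((continuous_const.sub continuous_id).sub continuous_const))).neg
    · exact continuous_const.add
        (continuous_const.max (((continuous_const.sub continuous_id).sub continuous_const).sub
          continuous_const))
  rw [lintegral_congr hsl, lintegral_indicator measurableSet_Ici _, nu_restrict h1 _ hgm]
  have hmul : ∀ x ∈ Ioi c1, ENNReal.ofReal (Real.exp (-x)) * ENNReal.ofReal (g x)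
      = ENNReal.ofReal (Real.exp (-x) * g x) :=
    fun x _ => (ENNReal.ofReal_mul (Real.exp_pos _).le).symm
  rw [setLIntegral_congr_fun measurableSet_Ioi hmul,
    ← ofReal_integral_eq_lintegral_ofReal (stage3 c1 c2 c3 xa hxa).1
      (ae_of_all _ fun x => by
        have h1 : (0:ℝ) ≤ 1 + max 0 (C - x - c2 - c3) := by positivity
        have := (Real.exp_pos (-x)).le
        have := (Real.exp_pos (-(c2 + max c3 (C - x - c2)))).le
        positivity),
    (stage3 c1 c2 c3 xa hxa).2]
private lemma mac_subset (lam : ℝ) (hlam : 0 < lam) (r : Fin 3 → ℝ) (hr : ∀ i, 0 ≤ r i)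
    (z : Fin 3 → ℝ)
    (hz0 : lam * ((2^(r 0)-1) + ((2^(r 0)-1)*(2^(r 1)-1) + (2^(r 0)-1)*(2^(r 2)-1))/2) ≤ z 0)
    (hz1 : lam * ((2^(r 1)-1) + ((2^(r 0)-1)*(2^(r 1)-1) + (2^(r 1)-1)*(2^(r 2)-1))/2) ≤ z 1)
    (hz2 : lam * ((2^(r 2)-1) + ((2^(r 0)-1)*(2^(r 2)-1) + (2^(r 1)-1)*(2^(r 2)-1))/2) ≤ z 2)
    (hzs : lam * ((2:ℝ) ^ (r 0 + r 1 + r 2) - 1) ≤ z 0 + z 1 + z 2)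
    (M : Finset (Fin 3)) (hM : M.Nonempty) :
    lam * ((2 : ℝ) ^ (∑ i ∈ M, r i) - 1) ≤ ∑ i ∈ M, z i := by
  have ha : ∀ i, 0 ≤ (2:ℝ) ^ (r i) - 1 := by
    intro i
    have : (2:ℝ)^(0:ℝ) ≤ 2^(r i) := Real.rpow_le_rpow_of_exponent_le one_le_two (hr i)
    simp only [Real.rpow_zero] at this; linarith
  have ha0 := ha 0; have ha1 := ha 1; have ha2 := ha 2
  have hadd : ∀ s t : ℝ, (2:ℝ) ^ (s + t) = 2 ^ s * 2 ^ t := fun s t =>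
    Real.rpow_add two_pos s t
  have hl := hlam.le
  fin_cases M
  · exact absurd hM (by simp)
  · simp [Finset.sum_mk, List.map, hadd]
    nlinarith [mul_nonneg hl (mul_nonneg ha0 ha1), mul_nonneg hl (mul_nonneg ha0 ha2)]
  · simp [Finset.sum_mk, List.map, hadd]
    nlinarith [mul_nonneg hl (mul_nonneg ha0 ha1), mul_nonneg hl (mul_nonneg ha1 ha2)]
  · simp [Finset.sum_mk, List.map, hadd]
    nlinarith [mul_nonneg hl (mul_nonneg ha0 ha2), mul_nonneg hl (mul_nonneg ha1 ha2)]
  · simp [Finset.sum_mk, List.map, hadd]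
    nlinarith [mul_nonneg hl (mul_nonneg ha0 ha2), mul_nonneg hl (mul_nonneg ha1 ha2)]
  · simp [Finset.sum_mk, List.map, hadd]
    nlinarith [mul_nonneg hl (mul_nonneg ha0 ha1), mul_nonneg hl (mul_nonneg ha1 ha2)]
  · simp [Finset.sum_mk, List.map, hadd]
    nlinarith [mul_nonneg hl (mul_nonneg ha0 ha1), mul_nonneg hl (mul_nonneg ha0 ha2)]
  · simp [Finset.sum_mk, List.map, hadd]
    have : lam * (2 ^ r 0 * (2 ^ r 1 * 2 ^ r 2) - 1) = lam * ((2:ℝ) ^ (r 0 + r 1 + r 2) - 1) := by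
      rw [hadd, hadd]; ring
    rw [this]
    linarith [hzs]

lemma iid_box (c1 c2 c3 C : ℝ) :
    iidExp (Fin 3) {z | c1 ≤ z 0 ∧ c2 ≤ z 1 ∧ c3 ≤ z 2 ∧ C ≤ z 0 + z 1 + z 2}
      = ((expMeasure 1).prod ((expMeasure 1).prod (expMeasure 1)))
          {p : ℝ × ℝ × ℝ | c1 ≤ p.1 ∧ c2 ≤ p.2.1 ∧ c3 ≤ p.2.2 ∧ C ≤ p.1 + p.2.1 + p.2.2} := by
  haveI : IsProbabilityMeasure (expMeasure 1) := isProbabilityMeasure_expMeasure one_pos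
  set ν := expMeasure 1
  have mp1 := measurePreserving_piFinSuccAbove (fun _ : Fin 3 => ν) 0
  have mp2 := (MeasurePreserving.id ν).prod (measurePreserving_finTwoArrow (α := ℝ) ν)
  have mp := mp2.comp mp1
  rw [iidExp]
  have hms : MeasurableSet {p : ℝ × ℝ × ℝ | c1 ≤ p.1 ∧ c2 ≤ p.2.1 ∧ c3 ≤ p.2.2
      ∧ C ≤ p.1 + p.2.1 + p.2.2} := by
    apply MeasurableSet.inter
    · exact measurableSet_le measurable_const measurable_fst
    apply MeasurableSet.inter
    · exact measurableSet_le measurable_const (measurable_fst.comp measurable_snd)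
    apply MeasurableSet.inter
    · exact measurableSet_le measurable_const (measurable_snd.comp measurable_snd)
    · exact measurableSet_le measurable_const
        ((measurable_fst.add (measurable_fst.comp measurable_snd)).add
          (measurable_snd.comp measurable_snd))
  rw [← mp.measure_preimage hms.nullMeasurableSet]
  congr 1


end aux

/-- Lower bound on the non-outage probability of a 3-link i.i.d. Rayleigh MAC:
$P(\text{all seven MAC inequalities}) \ge e^{-\lambda(2^{R_3}-1)} G(\lambda\alpha_3)$
with $G(x) = x^2/2 + x + 1$. -/
theorem mac3_nonoutage_lower (lam : ℝ) (hlam : 0 < lam) (r : Fin 3 → ℝ) (hr : ∀ i, 0 ≤ r i) :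
    ENNReal.ofReal (Real.exp (-(lam * ((2 : ℝ) ^ (∑ i, r i) - 1)))
        * (1 + lam * ∏ i, ((2 : ℝ) ^ r i - 1)
            + (lam * ∏ i, ((2 : ℝ) ^ r i - 1)) ^ 2 / 2))
      ≤ iidExp (Fin 3) {z | ∀ M : Finset (Fin 3), M.Nonempty →
          lam * ((2 : ℝ) ^ (∑ i ∈ M, r i) - 1) ≤ ∑ i ∈ M, z i} := by
  have ha : ∀ i, 0 ≤ (2:ℝ) ^ (r i) - 1 := by
    intro i
    have : (2:ℝ) ^ (0:ℝ) ≤ 2 ^ (r i) := Real.rpow_le_rpow_of_exponent_le one_le_two (hr i)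
    simp only [Real.rpow_zero] at this; linarith
  have ha0 := ha 0; have ha1 := ha 1; have ha2 := ha 2
  have hl := hlam.le
  set a0 := (2:ℝ) ^ (r 0) - 1 with ha0d
  set a1 := (2:ℝ) ^ (r 1) - 1 with ha1d
  set a2 := (2:ℝ) ^ (r 2) - 1 with ha2d
  set c1 := lam * (a0 + (a0 * a1 + a0 * a2) / 2) with hc1
  set c2 := lam * (a1 + (a0 * a1 + a1 * a2) / 2) with hc2
  set c3 := lam * (a2 + (a0 * a2 + a1 * a2) / 2) with hc3
  set xa := lam * (a0 * a1 * a2) with hxad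
  have h1 : 0 ≤ c1 := mul_nonneg hl
    (by nlinarith [mul_nonneg ha0 ha1, mul_nonneg ha0 ha2])
  have h2 : 0 ≤ c2 := mul_nonneg hl
    (by nlinarith [mul_nonneg ha0 ha1, mul_nonneg ha1 ha2])
  have h3 : 0 ≤ c3 := mul_nonneg hl
    (by nlinarith [mul_nonneg ha0 ha2, mul_nonneg ha1 ha2])
  have hxa : 0 ≤ xa := mul_nonneg hl (mul_nonneg (mul_nonneg ha0 ha1) ha2)
  have hsum : ∑ i, r i = r 0 + r 1 + r 2 := Fin.sum_univ_three r
  have hprod : (∏ i, ((2:ℝ) ^ r i - 1)) = a0 * a1 * a2 :=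
    Fin.prod_univ_three fun i => (2:ℝ) ^ r i - 1
  have hCe : lam * ((2:ℝ) ^ (r 0 + r 1 + r 2) - 1) = c1 + c2 + c3 + xa := by
    rw [Real.rpow_add two_pos, Real.rpow_add two_pos, hc1, hc2, hc3, hxad,
      show (2:ℝ) ^ (r 0) = 1 + a0 by rw [ha0d]; ring,
      show (2:ℝ) ^ (r 1) = 1 + a1 by rw [ha1d]; ring,
      show (2:ℝ) ^ (r 2) = 1 + a2 by rw [ha2d]; ring]
    ring
  have hpoly : 1 + lam * ∏ i, ((2 : ℝ) ^ r i - 1)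
      + (lam * ∏ i, ((2 : ℝ) ^ r i - 1)) ^ 2 / 2 = 1 + xa + xa ^ 2 / 2 := by
    rw [hprod, hxad]
  rw [hsum, hCe, hpoly]
  calc ENNReal.ofReal (Real.exp (-(c1 + c2 + c3 + xa)) * (1 + xa + xa ^ 2 / 2))
      = iidExp (Fin 3) {z | c1 ≤ z 0 ∧ c2 ≤ z 1 ∧ c3 ≤ z 2
          ∧ c1 + c2 + c3 + xa ≤ z 0 + z 1 + z 2} := by
        rw [iid_box, prodcalc c1 c2 c3 xa h1 h2 h3 hxa]
    _ ≤ iidExp (Fin 3) {z | ∀ M : Finset (Fin 3), M.Nonempty →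
          lam * ((2 : ℝ) ^ (∑ i ∈ M, r i) - 1) ≤ ∑ i ∈ M, z i} := by
        apply measure_mono
        rintro z ⟨hz0, hz1, hz2, hzs⟩ M hM
        have hzs' : lam * ((2:ℝ) ^ (r 0 + r 1 + r 2) - 1) ≤ z 0 + z 1 + z 2 := by
          rw [hCe]; exact hzs
        exact mac_subset lam hlam r hr z hz0 hz1 hz2 hzs' M hM
end

section
/- Let n ≥ 3, let z_1, ..., z_n be i.i.d. rate-1 exponential random variables, λ > 0, and r_1, ..., r_n ≥ 0. Let R_n = Σ_{i=1}^n r_i and α_n = Π_{i=1}^n (2^{r_i}−1). Then P(Σ_{i∈M} z_i ≥ λ(2^{Σ_{i∈M} r_i} − 1) for every nonempty M ⊆ {1,...,n}) ≥ e^{-λ(2^{R_n}−1)} · G(λα_n), where G(x) = x²/2 + x + 1. -/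
open MeasureTheory ProbabilityTheory Real

namespace MacAux
open Finset Set
open scoped ENNReal

noncomputable def mu0 : Measure ℝ := expMeasure 1
instance : IsProbabilityMeasure mu0 := isProbabilityMeasure_expMeasure one_pos

variable {n : ℕ}

/-- `2^(∑ r) = ∏ 2^(r i)` for rpow. -/
lemma rpow_sum (M : Finset (Fin n)) (r : Fin n → ℝ) :
    (2 : ℝ) ^ (∑ i ∈ M, r i) = ∏ i ∈ M, (2 : ℝ) ^ (r i) := by
  induction M using Finset.induction with
  | empty => simp
  | insert a s hi ih =>
    rw [Finset.sum_insert hi, Finset.prod_insert hi, Real.rpow_add two_pos, ih]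

lemma prod_add_one_le (M : Finset (Fin n)) (hM : M.Nonempty) (a : Fin n → ℝ)
    (ha : ∀ i, 0 ≤ a i) : (∏ i ∈ M, a i) + 1 ≤ ∏ i ∈ M, (1 + a i) := by
  induction hM using Finset.Nonempty.cons_induction with
  | singleton i => simp [add_comm]
  | cons i s hi hs ih =>
    rw [Finset.prod_cons, Finset.prod_cons]
    have h1 : (0:ℝ) ≤ ∏ j ∈ s, a j := Finset.prod_nonneg fun j _ => ha j
    nlinarith [ha i, ih]

lemma prod_le_prod_add_one (M : Finset (Fin n)) (a : Fin n → ℝ) (ha : ∀ i, 0 ≤ a i) :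
    (∏ i ∈ M, a i) ≤ ∏ i ∈ M, (1 + a i) :=
  Finset.prod_le_prod (fun i _ => ha i) (fun i _ => by linarith [ha i])

/-- prefix sum of rates -/
noncomputable def S (r : Fin n → ℝ) (i : Fin n) : ℝ :=
  ∑ j ∈ Finset.univ.filter (fun j : Fin n => (j : ℕ) < (i : ℕ)), r j

/-- per-link gain threshold parameter -/
noncomputable def aa (r : Fin n → ℝ) (i : Fin n) : ℝ := (2 : ℝ) ^ (r i) - 1

/-- baseline thresholds -/
noncomputable def v0 (lam : ℝ) (r : Fin n → ℝ) (i : Fin n) : ℝ :=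
  lam * (2 : ℝ) ^ (S r i) * aa r i

lemma aa_nonneg (r : Fin n → ℝ) (hr : ∀ i, 0 ≤ r i) (i : Fin n) : 0 ≤ aa r i := by
  have : (1:ℝ) = (2:ℝ) ^ (0:ℝ) := by simp
  have h2 : (2:ℝ) ^ (0:ℝ) ≤ (2:ℝ) ^ (r i) :=
    Real.rpow_le_rpow_of_exponent_le one_le_two (hr i)
  simp only [aa]; simp at h2; linarith

lemma one_add_aa (r : Fin n → ℝ) (i : Fin n) : 1 + aa r i = (2 : ℝ) ^ (r i) := by
  simp [aa]

lemma v0_nonneg (lam : ℝ) (hlam : 0 ≤ lam) (r : Fin n → ℝ) (hr : ∀ i, 0 ≤ r i) (i : Fin n) :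
    0 ≤ v0 lam r i :=
  mul_nonneg (mul_nonneg hlam (Real.rpow_nonneg (by norm_num) _)) (aa_nonneg r hr i)

/-- Lemma A : telescoping lower bound for any subset. -/
lemma lemmaA (lam : ℝ) (hlam : 0 ≤ lam) (r : Fin n → ℝ) (hr : ∀ i, 0 ≤ r i)
    (M : Finset (Fin n)) :
    lam * ((2 : ℝ) ^ (∑ i ∈ M, r i) - 1) ≤ ∑ i ∈ M, v0 lam r i := by
  induction M using Finset.strongInduction with
  | _ M ih =>
    rcases M.eq_empty_or_nonempty with rfl | hM
    · simp
    · set m := M.max' hM with hm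
      have hmM : m ∈ M := M.max'_mem hM
      have hsub : M.erase m ⊂ M := Finset.erase_ssubset hmM
      have IH := ih (M.erase m) hsub
      rw [← Finset.add_sum_erase _ _ hmM, ← Finset.add_sum_erase _ _ hmM]
      have hle : ∑ i ∈ M.erase m, r i ≤ S r m := by
        apply Finset.sum_le_sum_of_subset_of_nonneg
        · intro j hj
          simp only [Finset.mem_filter, Finset.mem_univ, true_and]
          have := Finset.mem_erase.mp hj
          have hjm : j ≤ m := Finset.le_max' M j this.2
          exact Fin.lt_def.mp (lt_of_le_of_ne hjm this.1)
        · intro j _ _; exact hr j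
      have h2 : (2:ℝ) ^ (∑ i ∈ M.erase m, r i) ≤ (2:ℝ) ^ (S r m) :=
        Real.rpow_le_rpow_of_exponent_le one_le_two hle
      rw [Real.rpow_add two_pos]
      have ham := aa_nonneg r hr m
      have h2r : (2:ℝ) ^ (r m) = 1 + aa r m := (one_add_aa r m).symm
      have hpos : (0:ℝ) < (2:ℝ) ^ (∑ i ∈ M.erase m, r i) := Real.rpow_pos_of_pos two_pos _
      -- goal : lam * (2^{r m} * 2^{Σ'} - 1) ≤ v0 lam r m + Σ' v0
      have key : lam * aa r m * (2:ℝ) ^ (∑ i ∈ M.erase m, r i)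
          ≤ lam * aa r m * (2:ℝ) ^ (S r m) :=
        mul_le_mul_of_nonneg_left h2 (mul_nonneg hlam ham)
      simp only [v0] at IH ⊢
      rw [h2r]
      nlinarith [key, IH]


/-- total telescoping -/
lemma sum_v0 (lam : ℝ) (r : Fin n → ℝ) :
    ∑ i, v0 lam r i = lam * ((2 : ℝ) ^ (∑ i, r i) - 1) := by
  classical
  set F : ℕ → ℝ := fun k => (2 : ℝ) ^ (∑ j ∈ Finset.univ.filter (fun j : Fin n => (j : ℕ) < k), r j) with hF
  have hterm : ∀ i : Fin n, v0 lam r i = lam * (F ((i : ℕ) + 1) - F (i : ℕ)) := by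
    intro i
    have hfil : Finset.univ.filter (fun j : Fin n => (j : ℕ) < (i : ℕ) + 1)
        = insert i (Finset.univ.filter (fun j : Fin n => (j : ℕ) < (i : ℕ))) := by
      ext j
      simp only [Finset.mem_filter, Finset.mem_univ, true_and, Finset.mem_insert]
      constructor
      · intro hj
        rcases Nat.lt_succ_iff_lt_or_eq.mp hj with h | h
        · exact Or.inr h
        · exact Or.inl (Fin.ext h)
      · rintro (rfl | hj)
        · omega
        · omega
    have hnotmem : i ∉ Finset.univ.filter (fun j : Fin n => (j : ℕ) < (i : ℕ)) := by
      simp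
    simp only [hF, hfil, Finset.sum_insert hnotmem]
    rw [Real.rpow_add two_pos]
    simp only [v0, S, aa]
    ring
  calc ∑ i, v0 lam r i = ∑ i : Fin n, lam * (F ((i : ℕ) + 1) - F (i : ℕ)) := by
        exact Finset.sum_congr rfl fun i _ => hterm i
    _ = ∑ k ∈ Finset.range n, lam * (F (k + 1) - F k) :=
        Fin.sum_univ_eq_sum_range (fun k => lam * (F (k + 1) - F k)) n
    _ = lam * ∑ k ∈ Finset.range n, (F (k + 1) - F k) := by rw [Finset.mul_sum]
    _ = lam * (F n - F 0) := by rw [Finset.sum_range_sub]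
    _ = lam * ((2 : ℝ) ^ (∑ i, r i) - 1) := by
        have h0 : F 0 = 1 := by simp [hF]
        have hn' : F n = (2 : ℝ) ^ (∑ i, r i) := by
          have : Finset.univ.filter (fun j : Fin n => (j : ℕ) < n) = Finset.univ := by
            ext j; simp [j.isLt]
          simp [hF, this]
        rw [h0, hn']


lemma S_last (hn : 0 < n) (r : Fin n → ℝ) :
    S r ⟨n - 1, by omega⟩ = ∑ i ∈ Finset.univ.erase ⟨n - 1, by omega⟩, r i := by
  apply Finset.sum_congr _ (fun _ _ => rfl)
  ext j
  simp only [Finset.mem_filter, Finset.mem_univ, true_and, Finset.mem_erase, and_true]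
  constructor
  · intro hj hj'
    rw [hj'] at hj; simp at hj
  · intro hj
    have : (j : ℕ) ≠ n - 1 := fun h => hj (Fin.ext h)
    have := j.isLt; omega

/-- core inequality: `2^{S last} ≥ ∏_{U} aa + 2^{Σ_{M'} r}` for `M' ⊊ U := univ.erase last`. -/
lemma coreIneq (hn : 0 < n) (r : Fin n → ℝ) (hr : ∀ i, 0 ≤ r i) (M' : Finset (Fin n))
    (hM'U : M' ⊆ Finset.univ.erase ⟨n - 1, by omega⟩)
    (hne : ((Finset.univ.erase (⟨n - 1, by omega⟩ : Fin n)) \ M').Nonempty) :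
    ∏ i ∈ Finset.univ.erase ⟨n - 1, by omega⟩, aa r i + (2 : ℝ) ^ (∑ i ∈ M', r i)
      ≤ (2 : ℝ) ^ (S r ⟨n - 1, by omega⟩) := by
  set U := Finset.univ.erase (⟨n - 1, by omega⟩ : Fin n) with hU
  set D := U \ M' with hD
  have hsplit : (∏ i ∈ D, (1 + aa r i)) * ∏ i ∈ M', (1 + aa r i) = ∏ i ∈ U, (1 + aa r i) :=
    Finset.prod_sdiff hM'U
  have hprodU : (2 : ℝ) ^ (S r ⟨n - 1, by omega⟩) = ∏ i ∈ U, (1 + aa r i) := by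
    rw [S_last hn r, rpow_sum]
    exact Finset.prod_congr rfl fun i _ => (one_add_aa r i).symm
  have hprodM : (2 : ℝ) ^ (∑ i ∈ M', r i) = ∏ i ∈ M', (1 + aa r i) := by
    rw [rpow_sum]
    exact Finset.prod_congr rfl fun i _ => (one_add_aa r i).symm
  have hUsplit : ∏ i ∈ U, aa r i = (∏ i ∈ D, aa r i) * ∏ i ∈ M', aa r i := by
    rw [hD, Finset.prod_sdiff hM'U]
  rw [hprodU, hprodM, ← hsplit, hUsplit]
  have h1 : (∏ i ∈ D, aa r i) + 1 ≤ ∏ i ∈ D, (1 + aa r i) :=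
    prod_add_one_le D hne (aa r) (aa_nonneg r hr)
  have h2 : (∏ i ∈ M', aa r i) ≤ ∏ i ∈ M', (1 + aa r i) :=
    prod_le_prod_add_one M' (aa r) (aa_nonneg r hr)
  have h3 : (0:ℝ) ≤ ∏ i ∈ M', aa r i := Finset.prod_nonneg fun i _ => aa_nonneg r hr i
  have h4 : (0:ℝ) ≤ ∏ i ∈ D, aa r i := Finset.prod_nonneg fun i _ => aa_nonneg r hr i
  have h5 : (0:ℝ) ≤ ∏ i ∈ M', (1 + aa r i) :=
    Finset.prod_nonneg fun i _ => by linarith [aa_nonneg r hr i]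
  have key1 : (∏ i ∈ D, aa r i) * ∏ i ∈ M', aa r i ≤ (∏ i ∈ D, aa r i) * ∏ i ∈ M', (1 + aa r i) :=
    mul_le_mul_of_nonneg_left h2 h4
  have key2 : ((∏ i ∈ D, aa r i) + 1) * ∏ i ∈ M', (1 + aa r i)
      ≤ (∏ i ∈ D, (1 + aa r i)) * ∏ i ∈ M', (1 + aa r i) :=
    mul_le_mul_of_nonneg_right h1 h5
  nlinarith [key1, key2]

/-- Lemma B: slack bound for sets containing the last index but missing some other index. -/
lemma lemmaB (hn : 0 < n) (lam : ℝ) (hlam : 0 ≤ lam) (r : Fin n → ℝ) (hr : ∀ i, 0 ≤ r i)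
    (M : Finset (Fin n)) (h3 : (⟨n - 1, by omega⟩ : Fin n) ∈ M)
    (j0 : Fin n) (hj0M : j0 ∉ M) (hj0n : j0 ≠ ⟨n - 1, by omega⟩) :
    lam * ((2 : ℝ) ^ (∑ i ∈ M, r i) - 1) + lam * ∏ i, aa r i ≤ ∑ i ∈ M, v0 lam r i := by
  set t3 : Fin n := ⟨n - 1, by omega⟩ with ht3
  set M' := M.erase t3 with hM'
  set U := Finset.univ.erase t3 with hU
  have hM'U : M' ⊆ U := fun j hj => by
    simp only [hM', Finset.mem_erase] at hj
    simp only [hU, Finset.mem_erase]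
    exact ⟨hj.1, Finset.mem_univ j⟩
  have hne : (U \ M').Nonempty := ⟨j0, by
    simp only [Finset.mem_sdiff, hU, hM', Finset.mem_erase]
    exact ⟨⟨hj0n, Finset.mem_univ j0⟩, fun h => hj0M h.2⟩⟩
  have hcore := coreIneq hn r hr M' hM'U hne
  have hA := lemmaA lam hlam r hr M'
  have hsplitv : ∑ i ∈ M, v0 lam r i = v0 lam r t3 + ∑ i ∈ M', v0 lam r i :=
    (Finset.add_sum_erase _ _ h3).symm
  have hsplitr : ∑ i ∈ M, r i = r t3 + ∑ i ∈ M', r i := (Finset.add_sum_erase _ _ h3).symm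
  have hsplita : ∏ i, aa r i = aa r t3 * ∏ i ∈ U, aa r i := (Finset.mul_prod_erase _ _ (Finset.mem_univ t3)).symm
  rw [hsplitv, hsplitr, hsplita, Real.rpow_add two_pos]
  have ha3 := aa_nonneg r hr t3
  have h2r : (2:ℝ) ^ (r t3) = 1 + aa r t3 := (one_add_aa r t3).symm
  have hkey : lam * aa r t3 * ((∏ i ∈ U, aa r i) + (2:ℝ) ^ (∑ i ∈ M', r i))
      ≤ lam * aa r t3 * (2:ℝ) ^ (S r t3) :=
    mul_le_mul_of_nonneg_left hcore (mul_nonneg hlam ha3)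
  have hv03 : v0 lam r t3 = lam * (2:ℝ) ^ (S r t3) * aa r t3 := rfl
  rw [h2r, hv03]
  nlinarith [hkey, hA]

/-- nonnegativity of the reduced last threshold -/
lemma vlast_nonneg (hn : 2 ≤ n) (lam : ℝ) (hlam : 0 ≤ lam) (r : Fin n → ℝ)
    (hr : ∀ i, 0 ≤ r i) :
    lam * ∏ i, aa r i ≤ v0 lam r ⟨n - 1, by omega⟩ := by
  set t3 : Fin n := ⟨n - 1, by omega⟩ with ht3
  set U := Finset.univ.erase t3 with hU
  have hne : (U \ (∅ : Finset (Fin n))).Nonempty := by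
    rw [Finset.sdiff_empty]
    refine ⟨⟨0, by omega⟩, ?_⟩
    simp only [hU, Finset.mem_erase]
    refine ⟨fun h => ?_, Finset.mem_univ _⟩
    have := Fin.mk.injEq (0:ℕ) (by omega : 0 < n) (n-1) (by omega) ▸ h
    simp [Fin.ext_iff] at h; omega
  have hcore := coreIneq (by omega) r hr ∅ (Finset.empty_subset _) hne
  simp only [Finset.sum_empty, Real.rpow_zero] at hcore
  have hsplita : ∏ i, aa r i = aa r t3 * ∏ i ∈ U, aa r i :=
    (Finset.mul_prod_erase _ _ (Finset.mem_univ t3)).symm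
  have ha3 := aa_nonneg r hr t3
  have hv03 : v0 lam r t3 = lam * (2:ℝ) ^ (S r t3) * aa r t3 := rfl
  rw [hsplita, hv03]
  nlinarith [mul_le_mul_of_nonneg_left hcore (mul_nonneg hlam ha3)]


lemma mu0_def : mu0 = volume.withDensity (exponentialPDF 1) := rfl

lemma pdf_meas : Measurable (exponentialPDF 1) :=
  (measurable_exponentialPDFReal 1).ennreal_ofReal

/-- indicator times constant -/
lemma ind_mul_eq (s : Set ℝ) (F : ℝ → ℝ≥0∞) :
    (fun y => s.indicator 1 y * F y) = s.indicator F := by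
  funext y
  by_cases h : y ∈ s <;> simp [Set.indicator_of_mem, Set.indicator_of_notMem, h]

/-- L1 : tail of the exponential distribution -/
lemma mu0_Ici {t : ℝ} (ht : 0 ≤ t) : mu0 (Ici t) = ENNReal.ofReal (exp (-t)) := by
  rw [mu0_def, withDensity_apply _ measurableSet_Ici]
  have hcong : ∫⁻ y in Ici t, exponentialPDF 1 y = ∫⁻ y in Ici t, ENNReal.ofReal (exp (-y)) := by
    apply setLIntegral_congr_fun measurableSet_Ici
    exact fun y hy => by
      rw [exponentialPDF_of_nonneg (le_trans ht hy)]
      norm_num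
  rw [hcong]
  have hint : IntegrableOn (fun y => exp (-y)) (Ici t) := by
    rw [integrableOn_Ici_iff_integrableOn_Ioi]
    exact exp_neg_integrableOn_Ioi t one_pos |>.congr_fun (fun y _ => by norm_num) measurableSet_Ioi
  rw [← ofReal_integral_eq_lintegral_ofReal hint (ae_of_all _ fun y => exp_nonneg _)]
  congr 1
  rw [integral_Ici_eq_integral_Ioi]
  exact integral_exp_neg_Ioi t

/-- L2' : lintegral of indicator times a constant -/
lemma lint_ind_const {s : Set ℝ} (hs : MeasurableSet s) (c : ℝ≥0∞) :
    ∫⁻ y, s.indicator 1 y * c ∂mu0 = mu0 s * c := by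
  rw [ind_mul_eq s (fun _ => c), lintegral_indicator hs, setLIntegral_const, mul_comm]

/-- L3 : exponential-tilted integral over `Ico` -/
lemma lint_Ico_exp (a b K : ℝ) (h0 : 0 ≤ a) :
    ∫⁻ y, (Ico a b).indicator 1 y * ENNReal.ofReal (exp (y - K)) ∂mu0
      = ENNReal.ofReal ((b - a) * exp (-K)) := by
  rw [ind_mul_eq, mu0_def, lintegral_indicator measurableSet_Ico,
    restrict_withDensity measurableSet_Ico,
    lintegral_withDensity_eq_lintegral_mul _ pdf_meas
      (by exact (measurable_id.sub measurable_const).exp.ennreal_ofReal :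
        Measurable fun y => ENNReal.ofReal (exp (y - K)))]
  have hcong : ∫⁻ y in Ico a b, (exponentialPDF 1 * fun y => ENNReal.ofReal (exp (y - K))) y
      = ∫⁻ _ in Ico a b, ENNReal.ofReal (exp (-K)) := by
    apply setLIntegral_congr_fun measurableSet_Ico
    intro y hy
    simp only [Pi.mul_apply]
    rw [exponentialPDF_of_nonneg (le_trans h0 hy.1),
      ← ENNReal.ofReal_mul (by positivity)]
    congr 1
    rw [show (1:ℝ) * rexp (-(1*y)) * rexp (y - K) = rexp (-(1*y)) * rexp (y - K) from by ring,
      ← Real.exp_add]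
    congr 1
    ring
  rw [hcong, setLIntegral_const, Real.volume_Ico, ← ENNReal.ofReal_mul (exp_nonneg _)]
  rw [mul_comm]

/-- L4 : linear-times-exponential integral over `Ico` -/
lemma lint_Ico_linexp (a b K : ℝ) (h0 : 0 ≤ a) (hab : a ≤ b) :
    ∫⁻ y, (Ico a b).indicator 1 y * ENNReal.ofReal ((b - y) * exp (y - K)) ∂mu0
      = ENNReal.ofReal ((b - a) ^ 2 / 2 * exp (-K)) := by
  rw [ind_mul_eq, mu0_def, lintegral_indicator measurableSet_Ico,
    restrict_withDensity measurableSet_Ico,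
    lintegral_withDensity_eq_lintegral_mul _ pdf_meas
      (by exact ((measurable_const.sub measurable_id).mul
          (measurable_id.sub measurable_const).exp).ennreal_ofReal :
        Measurable fun y => ENNReal.ofReal ((b - y) * exp (y - K)))]
  have hcong : ∫⁻ y in Ico a b, (exponentialPDF 1 * fun y => ENNReal.ofReal ((b - y) * exp (y - K))) y
      = ∫⁻ y in Ico a b, ENNReal.ofReal ((b - y) * exp (-K)) := by
    apply setLIntegral_congr_fun measurableSet_Ico
    intro y hy
    simp only [Pi.mul_apply]
    rw [exponentialPDF_of_nonneg (le_trans h0 hy.1),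
      ← ENNReal.ofReal_mul (by positivity)]
    congr 1
    rw [show (1:ℝ) * rexp (-(1*y)) * ((b - y) * rexp (y - K)) = (b-y) * (rexp (-(1*y)) * rexp (y -K)) from by ring, ← Real.exp_add]
    congr 2
    ring
  rw [hcong]
  have hint : IntegrableOn (fun y => (b - y) * exp (-K)) (Ico a b) := by
    apply Integrable.mul_const
    apply (continuous_const.sub continuous_id).integrableOn_Icc.mono_set Ico_subset_Icc_self
  rw [← ofReal_integral_eq_lintegral_ofReal hint]
  · congr 1
    rw [MeasureTheory.integral_mul_const, setIntegral_congr_set Ico_ae_eq_Ioc,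
      ← intervalIntegral.integral_of_le hab]
    have h1 : ∫ y in a..b, (b - y) = (b - a) ^ 2 / 2 := by
      rw [intervalIntegral.integral_sub (intervalIntegrable_const (c := b)) intervalIntegral.intervalIntegrable_id,
        intervalIntegral.integral_const, integral_id]
      simp only [smul_eq_mul]
      ring
    rw [h1]
  · apply ae_restrict_of_forall_mem measurableSet_Ico
    intro y hy
    exact mul_nonneg (by linarith [hy.2]) (exp_nonneg _)


/-- Marginalizing out box constraints. -/
lemma boxmarg (w : Fin n → ℝ) (s : Finset (Fin n)) (H : (Fin n → ℝ) → ℝ≥0∞)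
    (hH : Measurable H) (hdep : ∀ i ∈ s, ∀ z y, H (Function.update z i y) = H z)
    (x : Fin n → ℝ) :
    (∫⋯∫⁻_s, (fun z => H z * ∏ i ∈ s, (Ici (w i)).indicator 1 (z i)) ∂(fun _ => mu0)) x
      = (∏ i ∈ s, mu0 (Ici (w i))) * H x := by
  classical
  induction s using Finset.induction generalizing H x with
  | empty => simp [mul_comm]
  | insert i s hi ih =>
    have hmeas : Measurable fun z : Fin n → ℝ =>
        H z * ∏ j ∈ insert i s, (Ici (w j)).indicator 1 (z j) := by
      apply hH.mul
      apply Finset.measurable_prod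
      intro j _
      exact ((measurable_one.indicator measurableSet_Ici).comp (measurable_pi_apply j))
    rw [lmarginal_insert _ hmeas hi]
    have hpt : ∀ y : ℝ,
        (∫⋯∫⁻_s, (fun z => H z * ∏ j ∈ insert i s, (Ici (w j)).indicator 1 (z j))
            ∂(fun _ => mu0)) (Function.update x i y)
        = (∏ j ∈ s, mu0 (Ici (w j))) * (H x * (Ici (w i)).indicator 1 y) := by
      intro y
      have hfun : (fun z => H z * ∏ j ∈ insert i s, (Ici (w j)).indicator 1 (z j))
          = (fun z => (H z * (Ici (w i)).indicator 1 (z i)) * ∏ j ∈ s, (Ici (w j)).indicator 1 (z j)) := by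
        funext z
        rw [Finset.prod_insert hi, mul_assoc]
      rw [hfun]
      have hH' : Measurable fun z : Fin n → ℝ => H z * (Ici (w i)).indicator 1 (z i) :=
        hH.mul ((measurable_one.indicator measurableSet_Ici).comp (measurable_pi_apply i))
      have hdep' : ∀ j ∈ s, ∀ z y', (fun z : Fin n → ℝ => H z * (Ici (w i)).indicator 1 (z i))
          (Function.update z j y') = (fun z : Fin n → ℝ => H z * (Ici (w i)).indicator 1 (z i)) z := by
        intro j hj z y'
        simp only
        rw [hdep j (Finset.mem_insert_of_mem hj) z y',
          Function.update_of_ne (fun h : i = j => hi (h ▸ hj)) _ _]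
      have h2 := ih (H := fun z => H z * (Ici (w i)).indicator 1 (z i)) (x := Function.update x i y) hH' hdep'
      beta_reduce at h2
      rw [h2]
      rw [Function.update_self, hdep i (Finset.mem_insert_self i s) x y]
    simp_rw [hpt]
    rw [lintegral_const_mul' _ _ (ENNReal.prod_lt_top (fun j _ => measure_lt_top mu0 _)).ne]
    rw [Finset.prod_insert hi]
    have : ∫⁻ y, H x * (Ici (w i)).indicator 1 y ∂mu0 = H x * mu0 (Ici (w i)) := by
      rw [lintegral_const_mul _ (measurable_one.indicator measurableSet_Ici),
        lintegral_indicator_one measurableSet_Ici]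
    rw [this]
    ring

section events

variable (t1 t2 t3 : Fin n) (h12 : t1 ≠ t2) (h13 : t1 ≠ t3) (h23 : t2 ≠ t3)
variable (v : Fin n → ℝ) (hv : ∀ i, 0 ≤ v i) (x : ℝ) (hx : 0 ≤ x)

/-- the residual index set -/
def resid (t1 t2 t3 : Fin n) : Finset (Fin n) :=
  ((Finset.univ.erase t1).erase t2).erase t3

lemma mem_resid {t1 t2 t3 i : Fin n} :
    i ∈ resid t1 t2 t3 ↔ i ≠ t3 ∧ i ≠ t2 ∧ i ≠ t1 := by
  simp [resid, Finset.mem_erase]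

omit h12 h13 h23 in
lemma univ_eq_insert_resid :
    (Finset.univ : Finset (Fin n)) = insert t1 (insert t2 (insert t3 (resid t1 t2 t3))) := by
  ext i
  simp only [Finset.mem_univ, true_iff, Finset.mem_insert, mem_resid]
  by_cases e1 : i = t1
  · tauto
  · by_cases e2 : i = t2 <;> by_cases e3 : i = t3 <;> tauto

include h12 h13 in
lemma t1_notmem : t1 ∉ insert t2 (insert t3 (resid t1 t2 t3)) := by
  simp [Finset.mem_insert, mem_resid, h12, h13]

include h23 in
lemma t2_notmem : t2 ∉ insert t3 (resid t1 t2 t3) := by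
  simp [Finset.mem_insert, mem_resid, h23]

lemma t3_notmem : t3 ∉ resid t1 t2 t3 := by simp [mem_resid]

/-- measure of residual box -/
noncomputable def Cres (t1 t2 t3 : Fin n) (v : Fin n → ℝ) : ℝ≥0∞ :=
  ∏ i ∈ resid t1 t2 t3, mu0 (Ici (v i))

lemma Cres_ne_top : Cres t1 t2 t3 v ≠ ⊤ :=
  (ENNReal.prod_lt_top (fun j _ => measure_lt_top mu0 _)).ne

lemma Cres_eq (hv : ∀ i, 0 ≤ v i) :
    Cres t1 t2 t3 v = ENNReal.ofReal (exp (-(∑ i ∈ resid t1 t2 t3, v i))) := by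
  rw [Cres]
  rw [Finset.prod_congr rfl (fun i _ => mu0_Ici (hv i))]
  rw [← ENNReal.ofReal_prod_of_nonneg (fun i _ => (exp_nonneg _))]
  congr 1
  rw [← Real.exp_sum]
  congr 1
  rw [← Finset.sum_neg_distrib]

lemma ind_ne_top (S : Set ℝ) (y : ℝ) : S.indicator (1 : ℝ → ℝ≥0∞) y ≠ ⊤ := by
  by_cases h : y ∈ S <;> simp [h]

include h12 h13 h23 hv hx in
lemma measE1 :
    Measure.pi (fun _ : Fin n => mu0)
      (Set.pi Set.univ (fun i => Ici (v i + if i = t1 then x else 0)))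
      = Cres t1 t2 t3 v * (ENNReal.ofReal (exp (-(v t1 + x))) *
          ENNReal.ofReal (exp (-(v t2))) * ENNReal.ofReal (exp (-(v t3)))) := by
  rw [Measure.pi_pi]
  rw [univ_eq_insert_resid t1 t2 t3 (n := n)]
  rw [Finset.prod_insert (t1_notmem t1 t2 t3 h12 h13),
    Finset.prod_insert (t2_notmem t1 t2 t3 h23),
    Finset.prod_insert (t3_notmem t1 t2 t3)]
  have e1 : v t1 + (if t1 = t1 then x else 0) = v t1 + x := by simp
  have e2 : v t2 + (if t2 = t1 then x else 0) = v t2 := by simp [Ne.symm h12]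
  have e3 : v t3 + (if t3 = t1 then x else 0) = v t3 := by simp [Ne.symm h13]
  rw [e1, e2, e3, mu0_Ici (by linarith [hv t1] : (0:ℝ) ≤ v t1 + x), mu0_Ici (hv t2),
    mu0_Ici (hv t3)]
  have hres : ∏ i ∈ resid t1 t2 t3, mu0 (Ici (v i + if i = t1 then x else 0))
      = Cres t1 t2 t3 v := by
    rw [Cres]
    apply Finset.prod_congr rfl
    intro i hi
    obtain ⟨_, _, hi1⟩ := mem_resid.mp hi
    simp [hi1]
  rw [hres]
  ring

set_option maxHeartbeats 1000000 in
include h12 h13 h23 hv hx in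
lemma measE2 :
    Measure.pi (fun _ : Fin n => mu0)
      {z : Fin n → ℝ | z t1 ∈ Ico (v t1) (v t1 + x) ∧ v t1 + v t2 + x ≤ z t1 + z t2 ∧
        ∀ i, i ≠ t1 → i ≠ t2 → v i ≤ z i}
      = Cres t1 t2 t3 v * (ENNReal.ofReal (exp (-(v t3))) *
          ENNReal.ofReal (x * exp (-(v t1 + v t2 + x)))) := by
  classical
  set E : Set (Fin n → ℝ) := {z : Fin n → ℝ | z t1 ∈ Ico (v t1) (v t1 + x) ∧
      v t1 + v t2 + x ≤ z t1 + z t2 ∧ ∀ i, i ≠ t1 → i ≠ t2 → v i ≤ z i} with hE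
  set s := resid t1 t2 t3 with hs
  set H : (Fin n → ℝ) → ℝ≥0∞ := fun z =>
    (Ico (v t1) (v t1 + x)).indicator 1 (z t1) *
    ((Ici (v t2 + (v t1 + x - z t1))).indicator 1 (z t2) *
     (Ici (v t3)).indicator 1 (z t3)) with hH
  have hmeas_fac1 : Measurable fun z : Fin n → ℝ =>
      (Ico (v t1) (v t1+x)).indicator (1 : ℝ → ℝ≥0∞) (z t1) :=
    (measurable_one.indicator measurableSet_Ico).comp (measurable_pi_apply t1)
  have hmeas_fac3 : Measurable fun z : Fin n → ℝ =>
      (Ici (v t3)).indicator (1:ℝ→ℝ≥0∞) (z t3) :=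
    (measurable_one.indicator measurableSet_Ici).comp (measurable_pi_apply t3)
  have hmeas_fac2 : Measurable fun z : Fin n → ℝ =>
      (Ici (v t2 + (v t1 + x - z t1))).indicator (1:ℝ→ℝ≥0∞) (z t2) := by
    have heq : (fun z : Fin n → ℝ => (Ici (v t2 + (v t1 + x - z t1))).indicator (1:ℝ→ℝ≥0∞) (z t2))
        = fun z => if v t2 + (v t1 + x - z t1) ≤ z t2 then (1:ℝ≥0∞) else 0 := by
      funext z; rw [Set.indicator_apply]; simp [Set.mem_Ici]
    rw [heq]
    exact Measurable.ite (measurableSet_le (by fun_prop) (measurable_pi_apply t2))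
      measurable_const measurable_const
  have hH_meas : Measurable H := hmeas_fac1.mul (hmeas_fac2.mul hmeas_fac3)
  have hf_meas : Measurable (fun z => H z * ∏ i ∈ s, (Ici (v i)).indicator 1 (z i)) :=
    hH_meas.mul (Finset.measurable_prod _ fun i _ =>
      (measurable_one.indicator measurableSet_Ici).comp (measurable_pi_apply i))
  have hdep : ∀ i ∈ s, ∀ z y, H (Function.update z i y) = H z := by
    intro i hi z y
    obtain ⟨hi3, hi2, hi1⟩ := mem_resid.mp (hs ▸ hi)
    simp only [hH]
    rw [Function.update_of_ne (Ne.symm hi1), Function.update_of_ne (Ne.symm hi2),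
      Function.update_of_ne (Ne.symm hi3)]
  have hEmeas : MeasurableSet E := by
    rw [hE]
    have : {z : Fin n → ℝ | z t1 ∈ Ico (v t1) (v t1 + x) ∧ v t1 + v t2 + x ≤ z t1 + z t2 ∧
        ∀ i, i ≠ t1 → i ≠ t2 → v i ≤ z i}
        = ((fun z : Fin n → ℝ => z t1) ⁻¹' (Ico (v t1) (v t1+x))) ∩
          ({z : Fin n → ℝ | v t1 + v t2 + x ≤ z t1 + z t2} ∩
           ⋂ i, {z : Fin n → ℝ | i ≠ t1 → i ≠ t2 → v i ≤ z i}) := by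
      ext z; simp [Set.mem_iInter, Set.mem_setOf_eq]
    rw [this]
    refine MeasurableSet.inter (measurable_pi_apply t1 measurableSet_Ico)
      (MeasurableSet.inter ?_ (MeasurableSet.iInter fun i => ?_))
    · exact measurableSet_le measurable_const
        ((measurable_pi_apply t1).add (measurable_pi_apply t2))
    · by_cases e1 : i = t1
      · simp only [e1]
        convert MeasurableSet.univ
        ext z; simp
      · by_cases e2 : i = t2
        · simp only [e2]
          convert MeasurableSet.univ
          ext z; simp
        · have : {z : Fin n → ℝ | i ≠ t1 → i ≠ t2 → v i ≤ z i} = {z | v i ≤ z i} := by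
            ext z; simp [e1, e2]
          rw [this]
          exact measurableSet_le measurable_const (measurable_pi_apply i)
  have hind : ∀ z, E.indicator (1 : (Fin n → ℝ) → ℝ≥0∞) z
      = H z * ∏ i ∈ s, (Ici (v i)).indicator 1 (z i) := by
    intro z
    by_cases hz : z ∈ E
    · rw [Set.indicator_of_mem hz]
      obtain ⟨hz1, hz2, hz3⟩ := hz
      have f1 : (Ico (v t1) (v t1 + x)).indicator (1:ℝ→ℝ≥0∞) (z t1) = 1 :=
        Set.indicator_of_mem hz1 1
      have f2 : (Ici (v t2 + (v t1 + x - z t1))).indicator (1:ℝ→ℝ≥0∞) (z t2) = 1 :=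
        Set.indicator_of_mem (by simp only [Set.mem_Ici]; linarith) 1
      have f3 : (Ici (v t3)).indicator (1:ℝ→ℝ≥0∞) (z t3) = 1 :=
        Set.indicator_of_mem (by
          simp only [Set.mem_Ici]; exact hz3 t3 (Ne.symm h13) (Ne.symm h23)) 1
      have fp : ∏ i ∈ s, (Ici (v i)).indicator (1:ℝ→ℝ≥0∞) (z i) = 1 := by
        apply Finset.prod_eq_one
        intro i hi
        obtain ⟨_, hi2, hi1⟩ := mem_resid.mp (hs ▸ hi)
        exact Set.indicator_of_mem (by simp only [Set.mem_Ici]; exact hz3 i hi1 hi2) 1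
      simp only [hH, f1, f2, f3, fp, Pi.one_apply]
      norm_num
    · rw [Set.indicator_of_notMem hz]
      simp only [hE, Set.mem_setOf_eq, not_and_or] at hz
      rcases hz with hz | hz | hz
      · have f1 : (Ico (v t1) (v t1 + x)).indicator (1:ℝ→ℝ≥0∞) (z t1) = 0 :=
          Set.indicator_of_notMem hz 1
        simp only [hH, f1]
        simp
      · have f2 : (Ici (v t2 + (v t1 + x - z t1))).indicator (1:ℝ→ℝ≥0∞) (z t2) = 0 :=
          Set.indicator_of_notMem (by simp only [Set.mem_Ici]; intro h; exact hz (by linarith)) 1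
        simp only [hH, f2]
        simp
      · push_neg at hz
        obtain ⟨i, hi1, hi2, hilt⟩ := hz
        by_cases e3 : i = t3
        · have f3 : (Ici (v t3)).indicator (1:ℝ→ℝ≥0∞) (z t3) = 0 :=
            Set.indicator_of_notMem (by simp only [Set.mem_Ici]; subst e3; push_neg; linarith) 1
          simp only [hH, f3]
          simp
        · have hmem : i ∈ s := hs ▸ mem_resid.mpr ⟨e3, hi2, hi1⟩
          have fp : ∏ j ∈ s, (Ici (v j)).indicator (1:ℝ→ℝ≥0∞) (z j) = 0 :=
            Finset.prod_eq_zero hmem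
              (Set.indicator_of_notMem (by simp only [Set.mem_Ici]; push_neg; linarith) 1)
          rw [fp, mul_zero]
  have hstart : Measure.pi (fun _ : Fin n => mu0) E
      = ∫⁻ z, H z * ∏ i ∈ s, (Ici (v i)).indicator 1 (z i)
          ∂(Measure.pi (fun _ : Fin n => mu0)) := by
    rw [← lintegral_indicator_one hEmeas]
    exact lintegral_congr hind
  rw [hstart, lintegral_eq_lmarginal_univ (fun _ => (0:ℝ)),
    univ_eq_insert_resid t1 t2 t3 (n := n),
    lmarginal_insert _ hf_meas (t1_notmem t1 t2 t3 h12 h13)]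
  have hpeel : ∀ y1 : ℝ,
      (∫⋯∫⁻_insert t2 (insert t3 s), (fun z => H z * ∏ i ∈ s, (Ici (v i)).indicator 1 (z i))
          ∂fun _ => mu0) (Function.update (fun _ => (0:ℝ)) t1 y1)
      = (Cres t1 t2 t3 v * ENNReal.ofReal (exp (-(v t3)))) *
          ((Ico (v t1) (v t1 + x)).indicator 1 y1 *
            ENNReal.ofReal (exp (y1 - (v t1 + v t2 + x)))) := by
    intro y1
    rw [lmarginal_insert _ hf_meas (t2_notmem t1 t2 t3 h23)]
    have hinner : ∀ y2 : ℝ,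
        (∫⋯∫⁻_insert t3 s, (fun z => H z * ∏ i ∈ s, (Ici (v i)).indicator 1 (z i))
            ∂fun _ => mu0)
          (Function.update (Function.update (fun _ => (0:ℝ)) t1 y1) t2 y2)
        = (Ico (v t1) (v t1 + x)).indicator 1 y1 *
            ((Ici (v t2 + (v t1 + x - y1))).indicator 1 y2 *
             (Cres t1 t2 t3 v * ENNReal.ofReal (exp (-(v t3))))) := by
      intro y2
      rw [lmarginal_insert _ hf_meas (t3_notmem t1 t2 t3)]
      have hIII : ∀ y3 : ℝ,
          (∫⋯∫⁻_s, (fun z => H z * ∏ i ∈ s, (Ici (v i)).indicator 1 (z i)) ∂fun _ => mu0)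
            (Function.update (Function.update (Function.update (fun _ => (0:ℝ)) t1 y1) t2 y2) t3 y3)
          = (Cres t1 t2 t3 v *
              ((Ico (v t1) (v t1 + x)).indicator 1 y1 *
               (Ici (v t2 + (v t1 + x - y1))).indicator 1 y2)) *
              (Ici (v t3)).indicator 1 y3 := by
        intro y3
        rw [boxmarg v s H hH_meas hdep]
        have hev : H (Function.update (Function.update (Function.update
            (fun _ => (0:ℝ)) t1 y1) t2 y2) t3 y3)
            = (Ico (v t1) (v t1 + x)).indicator 1 y1 *
              ((Ici (v t2 + (v t1 + x - y1))).indicator 1 y2 *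
               (Ici (v t3)).indicator 1 y3) := by
          simp only [hH, Function.update_self, Function.update_of_ne h23,
            Function.update_of_ne h13, Function.update_of_ne h12, Function.update_self]
        rw [hev]
        rw [show (∏ i ∈ s, mu0 (Ici (v i))) = Cres t1 t2 t3 v from by rw [hs, Cres]]
        ring
      simp_rw [← hs, hIII]
      rw [lintegral_const_mul' _ _ (ENNReal.mul_ne_top (Cres_ne_top t1 t2 t3 v)
        (ENNReal.mul_ne_top (ind_ne_top _ _) (ind_ne_top _ _)))]
      rw [lintegral_indicator_one measurableSet_Ici, mu0_Ici (hv t3)]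
      ring
    simp_rw [← hs, hinner]
    rw [lintegral_const_mul' _ _ (ind_ne_top _ _)]
    rw [lint_ind_const measurableSet_Ici]
    by_cases hy1 : y1 ∈ Ico (v t1) (v t1 + x)
    · have hm : (0:ℝ) ≤ v t2 + (v t1 + x - y1) := by
        have := hy1.2
        have := hv t2
        simp only [Set.mem_Ico] at hy1
        linarith [hy1.2]
      rw [mu0_Ici hm]
      have : exp (-(v t2 + (v t1 + x - y1))) = exp (y1 - (v t1 + v t2 + x)) := by
        congr 1; ring
      rw [this]
      ring
    · rw [Set.indicator_of_notMem hy1]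
      simp
  simp_rw [← hs, hpeel]
  rw [lintegral_const_mul' _ _ (ENNReal.mul_ne_top (Cres_ne_top t1 t2 t3 v)
    ENNReal.ofReal_ne_top)]
  rw [lint_Ico_exp (v t1) (v t1 + x) (v t1 + v t2 + x) (hv t1)]
  have : (v t1 + x - v t1) = x := by ring
  rw [this]
  ring

set_option maxHeartbeats 1000000 in
include h12 h13 h23 hv hx in
lemma measE3 :
    Measure.pi (fun _ : Fin n => mu0)
      {z : Fin n → ℝ | z t1 ∈ Ico (v t1) (v t1 + x) ∧
        z t2 ∈ Ico (v t2) (v t2 + (v t1 + x - z t1)) ∧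
        v t1 + v t2 + v t3 + x ≤ z t1 + z t2 + z t3 ∧
        ∀ i, i ≠ t1 → i ≠ t2 → i ≠ t3 → v i ≤ z i}
      = Cres t1 t2 t3 v *
          ENNReal.ofReal (x ^ 2 / 2 * exp (-(v t1 + v t2 + v t3 + x))) := by
  classical
  set E : Set (Fin n → ℝ) := {z : Fin n → ℝ | z t1 ∈ Ico (v t1) (v t1 + x) ∧
      z t2 ∈ Ico (v t2) (v t2 + (v t1 + x - z t1)) ∧
      v t1 + v t2 + v t3 + x ≤ z t1 + z t2 + z t3 ∧
      ∀ i, i ≠ t1 → i ≠ t2 → i ≠ t3 → v i ≤ z i} with hE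
  set s := resid t1 t2 t3 with hs
  set H : (Fin n → ℝ) → ℝ≥0∞ := fun z =>
    (Ico (v t1) (v t1 + x)).indicator 1 (z t1) *
    ((Ico (v t2) (v t2 + (v t1 + x - z t1))).indicator 1 (z t2) *
     (Ici (v t3 + (v t1 + x - z t1) + (v t2 - z t2))).indicator 1 (z t3)) with hH
  have hmeas_fac1 : Measurable fun z : Fin n → ℝ =>
      (Ico (v t1) (v t1+x)).indicator (1 : ℝ → ℝ≥0∞) (z t1) :=
    (measurable_one.indicator measurableSet_Ico).comp (measurable_pi_apply t1)
  have hmeas_fac2 : Measurable fun z : Fin n → ℝ =>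
      (Ico (v t2) (v t2 + (v t1 + x - z t1))).indicator (1:ℝ→ℝ≥0∞) (z t2) := by
    have heq : (fun z : Fin n → ℝ =>
        (Ico (v t2) (v t2 + (v t1 + x - z t1))).indicator (1:ℝ→ℝ≥0∞) (z t2))
        = fun z => if v t2 ≤ z t2 ∧ z t2 < v t2 + (v t1 + x - z t1) then (1:ℝ≥0∞) else 0 := by
      funext z; rw [Set.indicator_apply]; simp [Set.mem_Ico]
    rw [heq]
    refine Measurable.ite (MeasurableSet.inter ?_ ?_) measurable_const measurable_const
    · exact measurableSet_le measurable_const (measurable_pi_apply t2)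
    · exact measurableSet_lt (measurable_pi_apply t2) (by fun_prop)
  have hmeas_fac3 : Measurable fun z : Fin n → ℝ =>
      (Ici (v t3 + (v t1 + x - z t1) + (v t2 - z t2))).indicator (1:ℝ→ℝ≥0∞) (z t3) := by
    have heq : (fun z : Fin n → ℝ =>
        (Ici (v t3 + (v t1 + x - z t1) + (v t2 - z t2))).indicator (1:ℝ→ℝ≥0∞) (z t3))
        = fun z => if v t3 + (v t1 + x - z t1) + (v t2 - z t2) ≤ z t3 then (1:ℝ≥0∞) else 0 := by
      funext z; rw [Set.indicator_apply]; simp [Set.mem_Ici]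
    rw [heq]
    exact Measurable.ite (measurableSet_le (by fun_prop) (measurable_pi_apply t3))
      measurable_const measurable_const
  have hH_meas : Measurable H := hmeas_fac1.mul (hmeas_fac2.mul hmeas_fac3)
  have hf_meas : Measurable (fun z => H z * ∏ i ∈ s, (Ici (v i)).indicator 1 (z i)) :=
    hH_meas.mul (Finset.measurable_prod _ fun i _ =>
      (measurable_one.indicator measurableSet_Ici).comp (measurable_pi_apply i))
  have hdep : ∀ i ∈ s, ∀ z y, H (Function.update z i y) = H z := by
    intro i hi z y
    obtain ⟨hi3, hi2, hi1⟩ := mem_resid.mp (hs ▸ hi)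
    simp only [hH]
    rw [Function.update_of_ne (Ne.symm hi1), Function.update_of_ne (Ne.symm hi2),
      Function.update_of_ne (Ne.symm hi3)]
  have hEmeas : MeasurableSet E := by
    rw [hE]
    have : {z : Fin n → ℝ | z t1 ∈ Ico (v t1) (v t1 + x) ∧
        z t2 ∈ Ico (v t2) (v t2 + (v t1 + x - z t1)) ∧
        v t1 + v t2 + v t3 + x ≤ z t1 + z t2 + z t3 ∧
        ∀ i, i ≠ t1 → i ≠ t2 → i ≠ t3 → v i ≤ z i}
        = ((fun z : Fin n → ℝ => z t1) ⁻¹' (Ico (v t1) (v t1+x))) ∩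
          (({z : Fin n → ℝ | v t2 ≤ z t2} ∩ {z : Fin n → ℝ | z t2 < v t2 + (v t1 + x - z t1)}) ∩
           ({z : Fin n → ℝ | v t1 + v t2 + v t3 + x ≤ z t1 + z t2 + z t3} ∩
            ⋂ i, {z : Fin n → ℝ | i ≠ t1 → i ≠ t2 → i ≠ t3 → v i ≤ z i})) := by
      ext z
      simp only [Set.mem_inter_iff, Set.mem_preimage, Set.mem_setOf_eq, Set.mem_iInter,
        Set.mem_Ico]
    rw [this]
    refine MeasurableSet.inter (measurable_pi_apply t1 measurableSet_Ico)
      (MeasurableSet.inter (MeasurableSet.inter ?_ ?_)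
        (MeasurableSet.inter ?_ (MeasurableSet.iInter fun i => ?_)))
    · exact measurableSet_le measurable_const (measurable_pi_apply t2)
    · exact measurableSet_lt (measurable_pi_apply t2) (by fun_prop)
    · exact measurableSet_le measurable_const (by fun_prop)
    · by_cases e1 : i = t1
      · simp only [e1]; convert MeasurableSet.univ; ext z; simp
      · by_cases e2 : i = t2
        · simp only [e2]; convert MeasurableSet.univ; ext z; simp
        · by_cases e3 : i = t3
          · simp only [e3]; convert MeasurableSet.univ; ext z; simp
          · have : {z : Fin n → ℝ | i ≠ t1 → i ≠ t2 → i ≠ t3 → v i ≤ z i}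
                = {z | v i ≤ z i} := by ext z; simp [e1, e2, e3]
            rw [this]
            exact measurableSet_le measurable_const (measurable_pi_apply i)
  have hind : ∀ z, E.indicator (1 : (Fin n → ℝ) → ℝ≥0∞) z
      = H z * ∏ i ∈ s, (Ici (v i)).indicator 1 (z i) := by
    intro z
    by_cases hz : z ∈ E
    · rw [Set.indicator_of_mem hz]
      obtain ⟨hz1, hz2, hz3, hz4⟩ := hz
      have f1 : (Ico (v t1) (v t1 + x)).indicator (1:ℝ→ℝ≥0∞) (z t1) = 1 :=
        Set.indicator_of_mem hz1 1
      have f2 : (Ico (v t2) (v t2 + (v t1 + x - z t1))).indicator (1:ℝ→ℝ≥0∞) (z t2) = 1 :=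
        Set.indicator_of_mem hz2 1
      have f3 : (Ici (v t3 + (v t1 + x - z t1) + (v t2 - z t2))).indicator (1:ℝ→ℝ≥0∞) (z t3) = 1 :=
        Set.indicator_of_mem (by simp only [Set.mem_Ici]; linarith) 1
      have fp : ∏ i ∈ s, (Ici (v i)).indicator (1:ℝ→ℝ≥0∞) (z i) = 1 := by
        apply Finset.prod_eq_one
        intro i hi
        obtain ⟨hi3, hi2, hi1⟩ := mem_resid.mp (hs ▸ hi)
        exact Set.indicator_of_mem (by simp only [Set.mem_Ici]; exact hz4 i hi1 hi2 hi3) 1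
      simp only [hH, f1, f2, f3, fp, Pi.one_apply]
      norm_num
    · rw [Set.indicator_of_notMem hz]
      simp only [hE, Set.mem_setOf_eq, not_and_or] at hz
      rcases hz with hz | hz | hz | hz
      · have f1 : (Ico (v t1) (v t1 + x)).indicator (1:ℝ→ℝ≥0∞) (z t1) = 0 :=
          Set.indicator_of_notMem hz 1
        simp only [hH, f1]; simp
      · have f2 : (Ico (v t2) (v t2 + (v t1 + x - z t1))).indicator (1:ℝ→ℝ≥0∞) (z t2) = 0 :=
          Set.indicator_of_notMem hz 1
        simp only [hH, f2]; simp
      · have f3 : (Ici (v t3 + (v t1 + x - z t1) + (v t2 - z t2))).indicator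
            (1:ℝ→ℝ≥0∞) (z t3) = 0 :=
          Set.indicator_of_notMem (by simp only [Set.mem_Ici]; push_neg; linarith) 1
        simp only [hH, f3]; simp
      · push_neg at hz
        obtain ⟨i, hi1, hi2, hi3, hilt⟩ := hz
        have hmem : i ∈ s := hs ▸ mem_resid.mpr ⟨hi3, hi2, hi1⟩
        have fp : ∏ j ∈ s, (Ici (v j)).indicator (1:ℝ→ℝ≥0∞) (z j) = 0 :=
          Finset.prod_eq_zero hmem
            (Set.indicator_of_notMem (by simp only [Set.mem_Ici]; push_neg; linarith) 1)
        rw [fp, mul_zero]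
  have hstart : Measure.pi (fun _ : Fin n => mu0) E
      = ∫⁻ z, H z * ∏ i ∈ s, (Ici (v i)).indicator 1 (z i)
          ∂(Measure.pi (fun _ : Fin n => mu0)) := by
    rw [← lintegral_indicator_one hEmeas]
    exact lintegral_congr hind
  rw [hstart, lintegral_eq_lmarginal_univ (fun _ => (0:ℝ)),
    univ_eq_insert_resid t1 t2 t3 (n := n),
    lmarginal_insert _ hf_meas (t1_notmem t1 t2 t3 h12 h13)]
  have hpeel : ∀ y1 : ℝ,
      (∫⋯∫⁻_insert t2 (insert t3 s), (fun z => H z * ∏ i ∈ s, (Ici (v i)).indicator 1 (z i))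
          ∂fun _ => mu0) (Function.update (fun _ => (0:ℝ)) t1 y1)
      = Cres t1 t2 t3 v *
          ((Ico (v t1) (v t1 + x)).indicator 1 y1 *
            ENNReal.ofReal ((v t1 + x - y1) * exp (y1 - (v t1 + v t2 + v t3 + x)))) := by
    intro y1
    rw [lmarginal_insert _ hf_meas (t2_notmem t1 t2 t3 h23)]
    have hinner : ∀ y2 : ℝ,
        (∫⋯∫⁻_insert t3 s, (fun z => H z * ∏ i ∈ s, (Ici (v i)).indicator 1 (z i))
            ∂fun _ => mu0)
          (Function.update (Function.update (fun _ => (0:ℝ)) t1 y1) t2 y2)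
        = (Cres t1 t2 t3 v * (Ico (v t1) (v t1 + x)).indicator 1 y1) *
            ((Ico (v t2) (v t2 + (v t1 + x - y1))).indicator 1 y2 *
              ENNReal.ofReal (exp (y2 - (v t1 + v t2 + v t3 + x - y1)))) := by
      intro y2
      rw [lmarginal_insert _ hf_meas (t3_notmem t1 t2 t3)]
      have hIII : ∀ y3 : ℝ,
          (∫⋯∫⁻_s, (fun z => H z * ∏ i ∈ s, (Ici (v i)).indicator 1 (z i)) ∂fun _ => mu0)
            (Function.update (Function.update (Function.update (fun _ => (0:ℝ)) t1 y1) t2 y2) t3 y3)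
          = (Cres t1 t2 t3 v *
              ((Ico (v t1) (v t1 + x)).indicator 1 y1 *
               (Ico (v t2) (v t2 + (v t1 + x - y1))).indicator 1 y2)) *
              (Ici (v t3 + (v t1 + x - y1) + (v t2 - y2))).indicator 1 y3 := by
        intro y3
        rw [boxmarg v s H hH_meas hdep]
        have hev : H (Function.update (Function.update (Function.update
            (fun _ => (0:ℝ)) t1 y1) t2 y2) t3 y3)
            = (Ico (v t1) (v t1 + x)).indicator 1 y1 *
              ((Ico (v t2) (v t2 + (v t1 + x - y1))).indicator 1 y2 *
               (Ici (v t3 + (v t1 + x - y1) + (v t2 - y2))).indicator 1 y3) := by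
          simp only [hH, Function.update_self, Function.update_of_ne h23,
            Function.update_of_ne h13, Function.update_of_ne h12, Function.update_self]
        rw [hev]
        rw [show (∏ i ∈ s, mu0 (Ici (v i))) = Cres t1 t2 t3 v from by rw [hs, Cres]]
        ring
      simp_rw [← hs, hIII]
      rw [lintegral_const_mul' _ _ (ENNReal.mul_ne_top (Cres_ne_top t1 t2 t3 v)
        (ENNReal.mul_ne_top (ind_ne_top _ _) (ind_ne_top _ _)))]
      rw [lintegral_indicator_one measurableSet_Ici]
      by_cases hy2 : y2 ∈ Ico (v t2) (v t2 + (v t1 + x - y1))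
      · have hB : (0:ℝ) ≤ v t3 + (v t1 + x - y1) + (v t2 - y2) := by
          simp only [Set.mem_Ico] at hy2
          have := hv t3
          linarith [hy2.2]
        rw [mu0_Ici hB]
        have : exp (-(v t3 + (v t1 + x - y1) + (v t2 - y2)))
            = exp (y2 - (v t1 + v t2 + v t3 + x - y1)) := by
          congr 1; ring
        rw [this]
        ring
      · rw [Set.indicator_of_notMem hy2]
        simp
    simp_rw [← hs, hinner]
    rw [lintegral_const_mul' _ _ (ENNReal.mul_ne_top (Cres_ne_top t1 t2 t3 v)
      (ind_ne_top _ _))]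
    rw [lint_Ico_exp (v t2) (v t2 + (v t1 + x - y1)) (v t1 + v t2 + v t3 + x - y1) (hv t2)]
    have : (v t2 + (v t1 + x - y1) - v t2) * exp (-(v t1 + v t2 + v t3 + x - y1))
        = (v t1 + x - y1) * exp (y1 - (v t1 + v t2 + v t3 + x)) := by
      have : exp (-(v t1 + v t2 + v t3 + x - y1)) = exp (y1 - (v t1 + v t2 + v t3 + x)) := by
        congr 1; ring
      rw [this]; ring
    rw [this]
    ring
  simp_rw [← hs, hpeel]
  rw [lintegral_const_mul' _ _ (Cres_ne_top t1 t2 t3 v)]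
  rw [lint_Ico_linexp (v t1) (v t1 + x) (v t1 + v t2 + v t3 + x) (hv t1) (by linarith [hv t1])]
  congr 2
  ring

end events


end MacAux

set_option maxHeartbeats 4000000 in
open MacAux in
/-- Lower bound on the non-outage probability of an $n$-link ($n\ge 3$) i.i.d. Rayleigh MAC:
$P(\text{non-outage}) \ge e^{-\lambda(2^{R_n}-1)} G(\lambda\alpha_n)$ with
$G(x)=x^2/2+x+1$, $R_n=\sum r_i$, $\alpha_n=\prod(2^{r_i}-1)$. -/
theorem macn_nonoutage_lower (n : ℕ) (hn : 3 ≤ n) (lam : ℝ) (hlam : 0 < lam)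
    (r : Fin n → ℝ) (hr : ∀ i, 0 ≤ r i) :
    ENNReal.ofReal (Real.exp (-(lam * ((2 : ℝ) ^ (∑ i, r i) - 1)))
        * ((lam * ∏ i, ((2 : ℝ) ^ r i - 1)) ^ 2 / 2
            + lam * ∏ i, ((2 : ℝ) ^ r i - 1) + 1))
      ≤ iidExp (Fin n) {z | ∀ M : Finset (Fin n), M.Nonempty →
          lam * ((2 : ℝ) ^ (∑ i ∈ M, r i) - 1) ≤ ∑ i ∈ M, z i} := by
  classical
  set t1 : Fin n := ⟨n - 3, by omega⟩ with ht1
  set t2 : Fin n := ⟨n - 2, by omega⟩ with ht2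
  set t3 : Fin n := ⟨n - 1, by omega⟩ with ht3
  have h12 : t1 ≠ t2 := by simp only [ht1, ht2, ne_eq, Fin.mk.injEq]; omega
  have h13 : t1 ≠ t3 := by simp only [ht1, ht3, ne_eq, Fin.mk.injEq]; omega
  have h23 : t2 ≠ t3 := by simp only [ht2, ht3, ne_eq, Fin.mk.injEq]; omega
  set xx : ℝ := lam * ∏ i, aa r i with hxx
  have hx0 : 0 ≤ xx := mul_nonneg hlam.le (Finset.prod_nonneg fun i _ => aa_nonneg r hr i)
  set vv : Fin n → ℝ := fun i => if i = t3 then v0 lam r i - xx else v0 lam r i with hvv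
  have hvt1 : vv t1 = v0 lam r t1 := by simp [hvv, h13]
  have hvt2 : vv t2 = v0 lam r t2 := by simp [hvv, h23]
  have hvt3 : vv t3 = v0 lam r t3 - xx := by simp [hvv]
  have hv0 : ∀ i, 0 ≤ vv i := by
    intro i
    by_cases e : i = t3
    · subst e
      rw [hvt3]
      have hh := vlast_nonneg (show 2 ≤ n by omega) lam hlam.le r hr
      rw [ht3, hxx]
      have : (⟨n - 1, by omega⟩ : Fin n) = ⟨n - 1, by omega⟩ := rfl
      linarith [hh]
    · simp only [hvv, if_neg e]
      exact v0_nonneg lam hlam.le r hr i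
  have hsumVV : ∀ M : Finset (Fin n), ∑ i ∈ M, vv i
      = (∑ i ∈ M, v0 lam r i) + (if t3 ∈ M then -xx else 0) := by
    intro M
    have hterm : ∀ i, vv i = v0 lam r i + (if i = t3 then -xx else 0) := by
      intro i; by_cases e : i = t3 <;> simp [hvv, e, sub_eq_add_neg]
    rw [Finset.sum_congr rfl fun i _ => hterm i, Finset.sum_add_distrib,
      Finset.sum_ite_eq' M t3 fun _ => -xx]
  -- the master inclusion
  have hInc : ∀ z : Fin n → ℝ, (∀ i, vv i ≤ z i) →
      vv t1 + vv t2 + vv t3 + xx ≤ z t1 + z t2 + z t3 →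
      ∀ M : Finset (Fin n), M.Nonempty →
        lam * ((2 : ℝ) ^ (∑ i ∈ M, r i) - 1) ≤ ∑ i ∈ M, z i := by
    intro z hz hslack M _
    have hzv : ∑ i ∈ M, vv i ≤ ∑ i ∈ M, z i := Finset.sum_le_sum fun i _ => hz i
    by_cases e3 : t3 ∈ M
    · by_cases e1 : t1 ∈ M
      · by_cases e2 : t2 ∈ M
        · have hsub : ({t1, t2, t3} : Finset (Fin n)) ⊆ M := by
            intro j hj
            simp only [Finset.mem_insert, Finset.mem_singleton] at hj
            rcases hj with rfl | rfl | rfl <;> assumption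
          have htr : ∑ i ∈ ({t1, t2, t3} : Finset (Fin n)), (z i - vv i)
              = (z t1 - vv t1) + (z t2 - vv t2) + (z t3 - vv t3) := by
            rw [Finset.sum_insert (by simp [h12, h13]), Finset.sum_insert (by simp [h23]),
              Finset.sum_singleton]
            ring
          have hmono : ∑ i ∈ ({t1, t2, t3} : Finset (Fin n)), (z i - vv i)
              ≤ ∑ i ∈ M, (z i - vv i) :=
            Finset.sum_le_sum_of_subset_of_nonneg hsub fun i _ _ => by linarith [hz i]
          have hdiff : ∑ i ∈ M, (z i - vv i) = ∑ i ∈ M, z i - ∑ i ∈ M, vv i :=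
            Finset.sum_sub_distrib _ _
          have hA := lemmaA lam hlam.le r hr M
          have hMv := hsumVV M
          rw [if_pos e3] at hMv
          linarith
        · have hB := lemmaB (show 0 < n by omega) lam hlam.le r hr M e3 t2 e2 h23
          have hMv := hsumVV M
          rw [if_pos e3] at hMv
          rw [← hxx] at hB
          linarith
      · have hB := lemmaB (show 0 < n by omega) lam hlam.le r hr M e3 t1 e1 h13
        have hMv := hsumVV M
        rw [if_pos e3] at hMv
        rw [← hxx] at hB
        linarith
    · have hA := lemmaA lam hlam.le r hr M
      have hMv := hsumVV M
      rw [if_neg e3, add_zero] at hMv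
      linarith
  -- events
  set E1 : Set (Fin n → ℝ) :=
    Set.pi Set.univ (fun i => Set.Ici (vv i + if i = t1 then xx else 0)) with hE1
  set E2 : Set (Fin n → ℝ) := {z | z t1 ∈ Set.Ico (vv t1) (vv t1 + xx) ∧
      vv t1 + vv t2 + xx ≤ z t1 + z t2 ∧ ∀ i, i ≠ t1 → i ≠ t2 → vv i ≤ z i} with hE2
  set E3 : Set (Fin n → ℝ) := {z | z t1 ∈ Set.Ico (vv t1) (vv t1 + xx) ∧
      z t2 ∈ Set.Ico (vv t2) (vv t2 + (vv t1 + xx - z t1)) ∧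
      vv t1 + vv t2 + vv t3 + xx ≤ z t1 + z t2 + z t3 ∧
      ∀ i, i ≠ t1 → i ≠ t2 → i ≠ t3 → vv i ≤ z i} with hE3
  set T : Set (Fin n → ℝ) := {z | ∀ M : Finset (Fin n), M.Nonempty →
      lam * ((2 : ℝ) ^ (∑ i ∈ M, r i) - 1) ≤ ∑ i ∈ M, z i} with hT
  -- inclusions
  have hsub1 : E1 ⊆ T := by
    intro z hz
    have hzi : ∀ i, vv i + (if i = t1 then xx else 0) ≤ z i := fun i =>
      hz i (Set.mem_univ i)
    have hall : ∀ i, vv i ≤ z i := by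
      intro i
      have h := hzi i
      by_cases e : i = t1
      · rw [if_pos e] at h; linarith
      · rw [if_neg e] at h; linarith
    refine hInc z hall ?_
    have h1 := hzi t1; have h2 := hzi t2; have h3 := hzi t3
    rw [if_pos rfl] at h1
    rw [if_neg (Ne.symm h12)] at h2
    rw [if_neg (Ne.symm h13)] at h3
    linarith
  have hsub2 : E2 ⊆ T := by
    intro z hz
    obtain ⟨hz1, hz2, hz3⟩ := hz
    simp only [Set.mem_Ico] at hz1
    have hall : ∀ i, vv i ≤ z i := by
      intro i
      by_cases e1 : i = t1
      · subst e1; exact hz1.1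
      · by_cases e2 : i = t2
        · subst e2; linarith [hz1.2]
        · exact hz3 i e1 e2
    refine hInc z hall ?_
    have h3 := hz3 t3 (Ne.symm h13) (Ne.symm h23)
    linarith
  have hsub3 : E3 ⊆ T := by
    intro z hz
    obtain ⟨hz1, hz2, hz3, hz4⟩ := hz
    simp only [Set.mem_Ico] at hz1 hz2
    have hall : ∀ i, vv i ≤ z i := by
      intro i
      by_cases e1 : i = t1
      · subst e1; exact hz1.1
      · by_cases e2 : i = t2
        · subst e2; exact hz2.1
        · by_cases e3 : i = t3
          · subst e3; linarith [hz1.2, hz2.2]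
          · exact hz4 i e1 e2 e3
    exact hInc z hall hz3
  -- disjointness
  have hd12 : Disjoint E1 E2 := by
    rw [Set.disjoint_left]
    intro z hz1 hz2
    have h1 : vv t1 + xx ≤ z t1 := by
      have h := hz1 t1 (Set.mem_univ t1)
      simpa using h
    have h2 := hz2.1
    simp only [Set.mem_Ico] at h2
    linarith [h2.2]
  have hd13 : Disjoint E1 E3 := by
    rw [Set.disjoint_left]
    intro z hz1 hz3
    have h1 : vv t1 + xx ≤ z t1 := by
      have h := hz1 t1 (Set.mem_univ t1)
      simpa using h
    have h2 := hz3.1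
    simp only [Set.mem_Ico] at h2
    linarith [h2.2]
  have hd23 : Disjoint E2 E3 := by
    rw [Set.disjoint_left]
    intro z hz2 hz3
    have h1 := hz2.2.1
    have h2 := hz3.2.1.2
    linarith
  -- measurability of E2 and E3
  have hE2meas : MeasurableSet E2 := by
    rw [hE2]
    have hrw : {z : Fin n → ℝ | z t1 ∈ Set.Ico (vv t1) (vv t1 + xx) ∧
        vv t1 + vv t2 + xx ≤ z t1 + z t2 ∧ ∀ i, i ≠ t1 → i ≠ t2 → vv i ≤ z i}
        = ((fun z : Fin n → ℝ => z t1) ⁻¹' (Set.Ico (vv t1) (vv t1 + xx))) ∩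
          ({z : Fin n → ℝ | vv t1 + vv t2 + xx ≤ z t1 + z t2} ∩
           ⋂ i, {z : Fin n → ℝ | i ≠ t1 → i ≠ t2 → vv i ≤ z i}) := by
      ext z; simp [Set.mem_iInter, Set.mem_setOf_eq]
    rw [hrw]
    refine MeasurableSet.inter (measurable_pi_apply t1 measurableSet_Ico)
      (MeasurableSet.inter ?_ (MeasurableSet.iInter fun i => ?_))
    · exact measurableSet_le measurable_const
        ((measurable_pi_apply t1).add (measurable_pi_apply t2))
    · by_cases e1 : i = t1
      · simp only [e1]; convert MeasurableSet.univ; ext z; simp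
      · by_cases e2 : i = t2
        · simp only [e2]; convert MeasurableSet.univ; ext z; simp
        · have : {z : Fin n → ℝ | i ≠ t1 → i ≠ t2 → vv i ≤ z i} = {z | vv i ≤ z i} := by
            ext z; simp [e1, e2]
          rw [this]
          exact measurableSet_le measurable_const (measurable_pi_apply i)
  have hE3meas : MeasurableSet E3 := by
    rw [hE3]
    have hrw : {z : Fin n → ℝ | z t1 ∈ Set.Ico (vv t1) (vv t1 + xx) ∧
        z t2 ∈ Set.Ico (vv t2) (vv t2 + (vv t1 + xx - z t1)) ∧
        vv t1 + vv t2 + vv t3 + xx ≤ z t1 + z t2 + z t3 ∧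
        ∀ i, i ≠ t1 → i ≠ t2 → i ≠ t3 → vv i ≤ z i}
        = ((fun z : Fin n → ℝ => z t1) ⁻¹' (Set.Ico (vv t1) (vv t1 + xx))) ∩
          (({z : Fin n → ℝ | vv t2 ≤ z t2} ∩
            {z : Fin n → ℝ | z t2 < vv t2 + (vv t1 + xx - z t1)}) ∩
           ({z : Fin n → ℝ | vv t1 + vv t2 + vv t3 + xx ≤ z t1 + z t2 + z t3} ∩
            ⋂ i, {z : Fin n → ℝ | i ≠ t1 → i ≠ t2 → i ≠ t3 → vv i ≤ z i})) := by
      ext z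
      simp only [Set.mem_inter_iff, Set.mem_preimage, Set.mem_setOf_eq, Set.mem_iInter,
        Set.mem_Ico]
    rw [hrw]
    refine MeasurableSet.inter (measurable_pi_apply t1 measurableSet_Ico)
      (MeasurableSet.inter (MeasurableSet.inter ?_ ?_)
        (MeasurableSet.inter ?_ (MeasurableSet.iInter fun i => ?_)))
    · exact measurableSet_le measurable_const (measurable_pi_apply t2)
    · exact measurableSet_lt (measurable_pi_apply t2) (by fun_prop)
    · exact measurableSet_le measurable_const (by fun_prop)
    · by_cases e1 : i = t1
      · simp only [e1]; convert MeasurableSet.univ; ext z; simp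
      · by_cases e2 : i = t2
        · simp only [e2]; convert MeasurableSet.univ; ext z; simp
        · by_cases e3 : i = t3
          · simp only [e3]; convert MeasurableSet.univ; ext z; simp
          · have : {z : Fin n → ℝ | i ≠ t1 → i ≠ t2 → i ≠ t3 → vv i ≤ z i}
                = {z | vv i ≤ z i} := by ext z; simp [e1, e2, e3]
            rw [this]
            exact measurableSet_le measurable_const (measurable_pi_apply i)
  -- the measure computation
  have hmu : iidExp (Fin n) = Measure.pi (fun _ : Fin n => mu0) := rfl
  have hm1 := measE1 t1 t2 t3 h12 h13 h23 vv hv0 xx hx0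
  have hm2 := measE2 t1 t2 t3 h12 h13 h23 vv hv0 xx hx0
  have hm3 := measE3 t1 t2 t3 h12 h13 h23 vv hv0 xx hx0
  -- key exponent identity
  have hkey : lam * ((2 : ℝ) ^ (∑ i, r i) - 1)
      = (∑ i ∈ resid t1 t2 t3, vv i) + vv t1 + vv t2 + vv t3 + xx := by
    have h1 := sum_v0 lam r
    have h2 := hsumVV Finset.univ
    rw [if_pos (Finset.mem_univ t3)] at h2
    have h3 : ∑ i ∈ Finset.univ, vv i
        = (∑ i ∈ resid t1 t2 t3, vv i) + vv t1 + vv t2 + vv t3 := by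
      rw [univ_eq_insert_resid t1 t2 t3,
        Finset.sum_insert (t1_notmem t1 t2 t3 h12 h13),
        Finset.sum_insert (t2_notmem t1 t2 t3 h23),
        Finset.sum_insert (t3_notmem t1 t2 t3)]
      ring
    rw [h3] at h2
    linarith
  have hxx2 : lam * ∏ i, ((2 : ℝ) ^ (r i) - 1) = xx := rfl
  -- real-number identity
  have hreal : Real.exp (-(lam * ((2 : ℝ) ^ (∑ i, r i) - 1)))
        * ((lam * ∏ i, ((2 : ℝ) ^ r i - 1)) ^ 2 / 2
            + lam * ∏ i, ((2 : ℝ) ^ r i - 1) + 1)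
      = Real.exp (-(∑ i ∈ resid t1 t2 t3, vv i)) *
          (Real.exp (-(vv t1 + xx)) * Real.exp (-(vv t2)) * Real.exp (-(vv t3))
            + Real.exp (-(vv t3)) * (xx * Real.exp (-(vv t1 + vv t2 + xx)))
            + xx ^ 2 / 2 * Real.exp (-(vv t1 + vv t2 + vv t3 + xx))) := by
    rw [hxx2, hkey]
    rw [show -((∑ i ∈ resid t1 t2 t3, vv i) + vv t1 + vv t2 + vv t3 + xx)
        = -(∑ i ∈ resid t1 t2 t3, vv i) + (-(vv t1 + xx)) + (-(vv t2)) + (-(vv t3))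
        from by ring,
      Real.exp_add, Real.exp_add, Real.exp_add,
      show -(vv t1 + vv t2 + xx) = -(vv t1 + xx) + (-(vv t2)) from by ring, Real.exp_add,
      show -(vv t1 + vv t2 + vv t3 + xx)
        = -(vv t1 + xx) + (-(vv t2)) + (-(vv t3)) from by ring,
      Real.exp_add, Real.exp_add]
    ring
  -- assemble the ENNReal identity
  have hENN : ENNReal.ofReal (Real.exp (-(lam * ((2 : ℝ) ^ (∑ i, r i) - 1)))
        * ((lam * ∏ i, ((2 : ℝ) ^ r i - 1)) ^ 2 / 2
            + lam * ∏ i, ((2 : ℝ) ^ r i - 1) + 1))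
      = Measure.pi (fun _ : Fin n => mu0) E1 + Measure.pi (fun _ : Fin n => mu0) E2
        + Measure.pi (fun _ : Fin n => mu0) E3 := by
    rw [hE1, hE2, hE3, hm1, hm2, hm3, Cres_eq t1 t2 t3 vv hv0, hreal]
    rw [ENNReal.ofReal_mul (Real.exp_nonneg _)]
    rw [ENNReal.ofReal_add (by positivity)
      (mul_nonneg (by positivity) (Real.exp_nonneg _)),
      ENNReal.ofReal_add (by positivity)
      (mul_nonneg (Real.exp_nonneg _) (mul_nonneg hx0 (Real.exp_nonneg _)))]
    rw [ENNReal.ofReal_mul (Real.exp_nonneg _), ENNReal.ofReal_mul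
      (mul_nonneg (Real.exp_nonneg _) (Real.exp_nonneg _)),
      ENNReal.ofReal_mul (Real.exp_nonneg _)]
    ring
  rw [hmu]
  calc ENNReal.ofReal (Real.exp (-(lam * ((2 : ℝ) ^ (∑ i, r i) - 1)))
        * ((lam * ∏ i, ((2 : ℝ) ^ r i - 1)) ^ 2 / 2
            + lam * ∏ i, ((2 : ℝ) ^ r i - 1) + 1))
      = Measure.pi (fun _ : Fin n => mu0) E1 + Measure.pi (fun _ : Fin n => mu0) E2
        + Measure.pi (fun _ : Fin n => mu0) E3 := hENN
    _ = Measure.pi (fun _ : Fin n => mu0) ((E1 ∪ E2) ∪ E3) := by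
        rw [measure_union (Set.disjoint_union_left.mpr ⟨hd13, hd23⟩) hE3meas,
          measure_union hd12 hE2meas]
    _ ≤ Measure.pi (fun _ : Fin n => mu0) T := by
        apply measure_mono
        intro z hz
        rcases hz with (hz | hz) | hz
        · exact hsub1 hz
        · exact hsub2 hz
        · exact hsub3 hz
end

section
/- Let n ≥ 1, let z_1, ..., z_n be i.i.d. rate-1 exponential random variables, λ > 0, and r_1, ..., r_n ≥ 0. Let R_n = Σ r_i and S_n = Σ (2^{r_i}−1). Then the non-outage probability P(Σ_{i∈M} z_i ≥ λ(2^{Σ_{i∈M} r_i} − 1) for every nonempty M ⊆ {1,...,n}) is at most e^{-λS_n} · Γ(n, λ(2^{R_n}−1−S_n))/(n−1)!, where Γ(n,x) = (n−1)! e^{-x} Σ_{k=0}^{n-1} x^k/k! is the upper incomplete gamma function; equivalently it is at most e^{-λ(2^{R_n}−1)} Σ_{k=0}^{n-1} (λ(2^{R_n}−1−S_n))^k/k!. -/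
open MeasureTheory ProbabilityTheory Real

namespace MacAux
open Set

noncomputable def Etail (n : ℕ) (x : ℝ) : ℝ :=
  if 0 ≤ x then Real.exp (-x) * ∑ k ∈ Finset.range n, x ^ k / (Nat.factorial k) else 1

lemma Etail_of_nonpos {n : ℕ} (hn : 1 ≤ n) {x : ℝ} (hx : x ≤ 0) : Etail n x = 1 := by
  rcases lt_or_eq_of_le hx with h | h
  · simp [Etail, not_le.mpr h]
  · subst h
    have : ∑ k ∈ Finset.range n, (0 : ℝ) ^ k / (Nat.factorial k) = 1 := by
      rw [Finset.sum_eq_single 0]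
      · simp
      · intro k _ hk
        simp [zero_pow hk]
      · intro h; exact absurd (Finset.mem_range.mpr hn) h
    simp [Etail, this]

lemma Etail_nonneg (n : ℕ) (x : ℝ) : 0 ≤ Etail n x := by
  unfold Etail
  split_ifs with h
  · exact mul_nonneg (Real.exp_nonneg _) (Finset.sum_nonneg fun k _ =>
      div_nonneg (pow_nonneg h k) (Nat.cast_nonneg _))
  · exact zero_le_one

lemma measurable_Etail (n : ℕ) : Measurable (Etail n) := by
  unfold Etail
  exact Measurable.ite measurableSet_Ici
    ((Real.measurable_exp.comp measurable_neg).mul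
      (Finset.measurable_sum _ fun k _ => (measurable_id.pow_const k).div_const _))
    measurable_const

lemma exponentialPDF_eq_gammaPDF : exponentialPDF 1 = gammaPDF 1 1 := rfl

lemma expMeasure_apply {s : Set ℝ} (hs : MeasurableSet s) :
    expMeasure 1 s = ∫⁻ t in s, exponentialPDF 1 t := by
  rw [expMeasure, gammaMeasure, withDensity_apply _ hs, exponentialPDF_eq_gammaPDF]

lemma lintegral_ofReal_exp_Ici (m : ℝ) :
    ∫⁻ t in Ici m, ENNReal.ofReal (Real.exp (-t)) = ENNReal.ofReal (Real.exp (-m)) := by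
  rw [← setLIntegral_congr (Ioi_ae_eq_Ici (a := m)),
    ← ofReal_integral_eq_lintegral_ofReal]
  · rw [integral_exp_neg_Ioi]
  · exact (by simpa using exp_neg_integrableOn_Ioi m one_pos : IntegrableOn (fun x => rexp (-x)) (Ioi m))
  · filter_upwards with t using Real.exp_nonneg _

lemma expMeasure_Ici {m : ℝ} (hm : 0 ≤ m) :
    expMeasure 1 (Ici m) = ENNReal.ofReal (Real.exp (-m)) := by
  rw [expMeasure_apply measurableSet_Ici, ← lintegral_ofReal_exp_Ici m]
  refine setLIntegral_congr_fun measurableSet_Ici (fun t ht => ?_)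
  rw [exponentialPDF_of_nonneg (le_trans hm ht)]
  norm_num


lemma Etail_of_nonneg {n : ℕ} {x : ℝ} (hx : 0 ≤ x) :
    Etail n x = Real.exp (-x) * ∑ k ∈ Finset.range n, x ^ k / (Nat.factorial k) := if_pos hx

lemma key (n : ℕ) (hn : 1 ≤ n) {a : ℝ} (c : ℝ) :
    ∫⁻ t in Ici a, ENNReal.ofReal (Real.exp (-t) * Etail n (c - t)) ∂(volume : Measure ℝ)
      = ENNReal.ofReal (Real.exp (-a) * Etail (n + 1) (c - a)) := by
  rcases le_or_gt c a with hca | hca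
  · have h1 : ∀ t ∈ Ici a, ENNReal.ofReal (Real.exp (-t) * Etail n (c - t))
        = ENNReal.ofReal (Real.exp (-t)) := by
      intro t ht
      rw [Etail_of_nonpos hn (by simp only [mem_Ici] at ht; linarith), mul_one]
    rw [setLIntegral_congr_fun measurableSet_Ici h1, lintegral_ofReal_exp_Ici,
      Etail_of_nonpos (le_add_right hn) (by linarith), mul_one]
  · have hsplit : Ici a = Ico a c ∪ Ici c := (Ico_union_Ici_eq_Ici hca.le).symm
    have hdisj : Disjoint (Ico a c) (Ici c) := by
      apply disjoint_left.mpr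
      intro t ht ht'
      exact absurd ht.2 (not_lt.mpr ht')
    rw [hsplit, lintegral_union measurableSet_Ici hdisj]
    have hIci : ∫⁻ t in Ici c, ENNReal.ofReal (Real.exp (-t) * Etail n (c - t))
        = ENNReal.ofReal (Real.exp (-c)) := by
      have h1 : ∀ t ∈ Ici c, ENNReal.ofReal (Real.exp (-t) * Etail n (c - t))
          = ENNReal.ofReal (Real.exp (-t)) := by
        intro t ht
        rw [Etail_of_nonpos hn (by simp only [mem_Ici] at ht; linarith), mul_one]
      rw [setLIntegral_congr_fun measurableSet_Ici h1, lintegral_ofReal_exp_Ici]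
    have hIco : ∫⁻ t in Ico a c, ENNReal.ofReal (Real.exp (-t) * Etail n (c - t))
        = ENNReal.ofReal (Real.exp (-c) *
            ∑ k ∈ Finset.range n, (c - a) ^ (k + 1) / (Nat.factorial (k + 1))) := by
      have h1 : ∀ t ∈ Ico a c, ENNReal.ofReal (Real.exp (-t) * Etail n (c - t))
          = ENNReal.ofReal (Real.exp (-c) * ∑ k ∈ Finset.range n,
              (c - t) ^ k / (Nat.factorial k)) := by
        intro t ht
        rw [Etail_of_nonneg (by simp only [mem_Ico] at ht; linarith), ← mul_assoc,
          ← Real.exp_add]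
        ring_nf
      rw [setLIntegral_congr_fun measurableSet_Ico h1,
        setLIntegral_congr (((Ioo_ae_eq_Ico (a := a) (b := c)).symm.trans Ioo_ae_eq_Ioc) :
          Ico a c =ᵐ[volume] Ioc a c)]
      have hcont : Continuous (fun t : ℝ => Real.exp (-c) * ∑ k ∈ Finset.range n,
          (c - t) ^ k / (Nat.factorial k)) := by
        continuity
      rw [← ofReal_integral_eq_lintegral_ofReal
        (hcont.integrableOn_Ioc)
        (ae_restrict_of_forall_mem measurableSet_Ioc (fun t ht =>
          mul_nonneg (Real.exp_nonneg _) (Finset.sum_nonneg fun k _ =>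
            div_nonneg (pow_nonneg (by linarith [ht.2] : (0:ℝ) ≤ c - t) k)
              (Nat.cast_nonneg _))))]
      congr 1
      rw [← intervalIntegral.integral_of_le hca.le]
      rw [intervalIntegral.integral_const_mul]
      congr 1
      rw [intervalIntegral.integral_finset_sum (fun k _ => by
        apply IntervalIntegrable.div_const
        exact (Continuous.intervalIntegrable (by continuity) _ _))]
      refine Finset.sum_congr rfl fun k _ => ?_
      have : ∫ t in a..c, (c - t) ^ k / (Nat.factorial k)
          = (∫ t in a..c, (c - t) ^ k) / (Nat.factorial k) := by
        rw [intervalIntegral.integral_div]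
      rw [this]
      have hsub : ∫ t in a..c, (c - t) ^ k = ∫ t in (c - c)..(c - a), t ^ k := by
        exact intervalIntegral.integral_comp_sub_left (fun t => t ^ k) c
      rw [hsub, sub_self, integral_pow, zero_pow k.succ_ne_zero, Nat.factorial_succ]
      have h2 : (k.factorial:ℝ) ≠ 0 := Nat.cast_ne_zero.mpr k.factorial_ne_zero
      push_cast
      field_simp
      ring
    rw [hIco, hIci, ← ENNReal.ofReal_add (mul_nonneg (Real.exp_nonneg _) (Finset.sum_nonneg fun k _ =>
      div_nonneg (pow_nonneg (by linarith : (0:ℝ) ≤ c - a) _) (Nat.cast_nonneg _)))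
      (Real.exp_nonneg _)]
    rw [Etail_of_nonneg (by linarith), ← mul_assoc, ← Real.exp_add]
    have harg : -a + -(c - a) = -c := by ring
    rw [harg]
    rw [Finset.sum_range_succ', Nat.factorial_zero]
    congr 1
    push_cast
    ring

lemma iidExp_def (ι : Type*) [Fintype ι] : iidExp ι = Measure.pi fun _ => expMeasure 1 := rfl

lemma exponentialPDF_eq_gammaPDF' : exponentialPDF 1 = gammaPDF 1 1 := rfl

lemma G : ∀ n : ℕ, 1 ≤ n → ∀ (a : Fin n → ℝ), (∀ i, 0 ≤ a i) → ∀ b : ℝ,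
    iidExp (Fin n) {z | (∀ i, a i ≤ z i) ∧ b ≤ ∑ i, z i}
      = ENNReal.ofReal (Real.exp (-(∑ i, a i)) * Etail n (b - ∑ i, a i)) := by
  haveI : IsProbabilityMeasure (expMeasure 1) := isProbabilityMeasure_expMeasure one_pos
  refine Nat.le_induction ?_ ?_
  · -- base case n = 1
    intro a ha b
    have hset : {z : Fin 1 → ℝ | (∀ i, a i ≤ z i) ∧ b ≤ ∑ i, z i}
        = (MeasurableEquiv.funUnique (Fin 1) ℝ) ⁻¹' (Ici (max (a 0) b)) := by
      ext z
      simp [Fin.forall_fin_one, Fin.sum_univ_one, MeasurableEquiv.funUnique,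
        max_le_iff, and_comm]
    rw [iidExp_def, hset]
    erw [(measurePreserving_funUnique (expMeasure 1) (Fin 1)).measure_preimage_equiv]
    rw [expMeasure_Ici (le_max_of_le_left (ha 0))]
    rw [Fin.sum_univ_one]
    rcases le_total b (a 0) with h | h
    · rw [max_eq_left h, Etail_of_nonpos le_rfl (by linarith), mul_one]
    · rw [max_eq_right h, Etail_of_nonneg (by linarith : (0:ℝ) ≤ b - a 0)]
      simp [← Real.exp_add]
      ring_nf
  · -- inductive step
    intro n hn IH a ha b
    set A' : ℝ := ∑ j, a (Fin.succ j) with hA'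
    have hS : {z : Fin (n+1) → ℝ | (∀ i, a i ≤ z i) ∧ b ≤ ∑ i, z i}
        = (MeasurableEquiv.piFinSuccAbove (fun _ : Fin (n+1) => ℝ) 0) ⁻¹'
            {p : ℝ × (Fin n → ℝ) |
              a 0 ≤ p.1 ∧ ((∀ j, a (Fin.succ j) ≤ p.2 j) ∧ b - p.1 ≤ ∑ j, p.2 j)} := by
      ext z
      simp only [mem_setOf_eq, mem_preimage, MeasurableEquiv.piFinSuccAbove_apply,
        Fin.forall_fin_succ, Fin.sum_univ_succ, Fin.succAbove_zero, Fin.insertNthEquiv_zero,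
        Fin.consEquiv_symm_apply, Fin.tail]
      constructor
      · rintro ⟨⟨h0, hs⟩, hb⟩
        exact ⟨h0, hs, by linarith⟩
      · rintro ⟨h0, hs, hb⟩
        exact ⟨⟨h0, hs⟩, by linarith⟩
    have hA'nonneg : 0 ≤ A' := Finset.sum_nonneg fun j _ => ha _
    have hmp := measurePreserving_piFinSuccAbove (fun _ : Fin (n+1) => expMeasure 1) 0
    rw [iidExp_def, hS, hmp.measure_preimage_equiv]
    have hmeas2 : MeasurableSet {p : ℝ × (Fin n → ℝ) |
        a 0 ≤ p.1 ∧ ((∀ j, a (Fin.succ j) ≤ p.2 j) ∧ b - p.1 ≤ ∑ j, p.2 j)} := by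
      rw [setOf_and, setOf_and]
      refine (measurableSet_le measurable_const measurable_fst).inter (MeasurableSet.inter ?_
        (measurableSet_le (measurable_const.sub measurable_fst)
          (Finset.measurable_sum _ fun j _ => measurable_snd.eval)))
      rw [setOf_forall]
      exact MeasurableSet.iInter fun j => measurableSet_le measurable_const
        measurable_snd.eval
    rw [Measure.prod_apply hmeas2]
    have hinner : ∀ t : ℝ, (Measure.pi fun _ : Fin n => expMeasure 1)
        (Prod.mk t ⁻¹' {p : ℝ × (Fin n → ℝ) |
          a 0 ≤ p.1 ∧ ((∀ j, a (Fin.succ j) ≤ p.2 j) ∧ b - p.1 ≤ ∑ j, p.2 j)})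
        = indicator (Ici (a 0))
            (fun t => ENNReal.ofReal (Real.exp (-A') * Etail n ((b - A') - t))) t := by
      intro t
      rcases le_or_gt (a 0) t with h | h
      · rw [indicator_of_mem (show t ∈ Ici (a 0) from h)]
        have hpre : Prod.mk t ⁻¹' {p : ℝ × (Fin n → ℝ) |
            a 0 ≤ p.1 ∧ ((∀ j, a (Fin.succ j) ≤ p.2 j) ∧ b - p.1 ≤ ∑ j, p.2 j)}
            = {y : Fin n → ℝ | (∀ j, a (Fin.succ j) ≤ y j) ∧ (b - t) ≤ ∑ j, y j} := by
          ext y; simp [h]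
        rw [hpre, ← iidExp_def, IH _ (fun j => ha _) (b - t)]
        congr 2
        ring_nf
        rw [hA']
      · rw [indicator_of_notMem (by simpa using h.not_ge)]
        have hpre : Prod.mk t ⁻¹' {p : ℝ × (Fin n → ℝ) |
            a 0 ≤ p.1 ∧ ((∀ j, a (Fin.succ j) ≤ p.2 j) ∧ b - p.1 ≤ ∑ j, p.2 j)}
            = ∅ := by
          ext y; simp [h.not_ge]
        rw [hpre, measure_empty]
    rw [lintegral_congr hinner, lintegral_indicator measurableSet_Ici _]
    have hg : Measurable fun t => ENNReal.ofReal (Real.exp (-A') * Etail n ((b - A') - t)) :=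
      ENNReal.measurable_ofReal.comp (measurable_const.mul
        ((measurable_Etail n).comp (measurable_const.sub measurable_id)))
    have hpdfm : Measurable (gammaPDF 1 1) := by
      unfold gammaPDF
      exact ENNReal.measurable_ofReal.comp (measurable_gammaPDFReal 1 1)
    rw [expMeasure, gammaMeasure, restrict_withDensity measurableSet_Ici,
      lintegral_withDensity_eq_lintegral_mul _ hpdfm hg]
    have hcong : ∀ t ∈ Ici (a 0),
        ((gammaPDF 1 1) *
          fun t => ENNReal.ofReal (Real.exp (-A') * Etail n ((b - A') - t))) t
        = ENNReal.ofReal (Real.exp (-A')) *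
            ENNReal.ofReal (Real.exp (-t) * Etail n ((b - A') - t)) := by
      intro t ht
      have ht0 : (0:ℝ) ≤ t := le_trans (ha 0) ht
      have hpdf : ENNReal.ofReal (gammaPDFReal 1 1 t) = ENNReal.ofReal (Real.exp (-t)) := by
        have := exponentialPDF_of_nonneg (r := 1) ht0
        simp only [exponentialPDF, exponentialPDFReal] at this
        rw [this]
        norm_num
      have hpdf2 : gammaPDF 1 1 t = ENNReal.ofReal (Real.exp (-t)) := by
        unfold gammaPDF; exact hpdf
      simp only [Pi.mul_apply, hpdf2]
      rw [← ENNReal.ofReal_mul (Real.exp_nonneg _), ← ENNReal.ofReal_mul (Real.exp_nonneg _)]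
      congr 1
      ring
    have hm : Measurable fun t : ℝ => ENNReal.ofReal (Real.exp (-t) * Etail n (b - A' - t)) := by
      apply Measurable.ennreal_ofReal
      apply Measurable.mul
      · exact Real.measurable_exp.comp measurable_neg
      · exact (measurable_Etail n).comp (measurable_const.sub measurable_id)
    rw [setLIntegral_congr_fun measurableSet_Ici hcong,
      lintegral_const_mul _ hm,
      key n hn (b - A'), ← ENNReal.ofReal_mul (Real.exp_nonneg _), Fin.sum_univ_succ]
    congr 1
    rw [← mul_assoc, ← Real.exp_add]
    have h1 : -A' + -(a 0) = -(a 0 + A') := by ring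
    have h2 : b - A' - a 0 = b - (a 0 + A') := by ring
    rw [h1, h2]


lemma one_add_sum_le_prod {ι : Type*} (s : Finset ι) (f : ι → ℝ) (hf : ∀ i ∈ s, 0 ≤ f i) :
    1 + ∑ i ∈ s, f i ≤ ∏ i ∈ s, (1 + f i) := by
  induction s using Finset.cons_induction with
  | empty => simp
  | cons i s hi IH =>
    rw [Finset.sum_cons, Finset.prod_cons]
    have h0 : 0 ≤ f i := hf i (Finset.mem_cons_self i s)
    have hsum : 0 ≤ ∑ j ∈ s, f j :=
      Finset.sum_nonneg fun j hj => hf j (Finset.mem_cons_of_mem hj)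
    have hIH := IH (fun j hj => hf j (Finset.mem_cons_of_mem hj))
    nlinarith [mul_le_mul_of_nonneg_left hIH (by linarith : (0:ℝ) ≤ 1 + f i),
      mul_nonneg h0 hsum]

end MacAux

/-- Upper bound on the non-outage probability of an $n$-link i.i.d. Rayleigh MAC:
$P(\text{non-outage}) \le e^{-\lambda(2^{R_n}-1)}\sum_{k=0}^{n-1}(\lambda(2^{R_n}-1-S_n))^k/k!$,
i.e. $e^{-\lambda S_n}\Gamma(n, \lambda(2^{R_n}-1-S_n))/(n-1)!$. -/
theorem macn_nonoutage_upper (n : ℕ) (hn : 1 ≤ n) (lam : ℝ) (hlam : 0 < lam)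
    (r : Fin n → ℝ) (hr : ∀ i, 0 ≤ r i) :
    iidExp (Fin n) {z | ∀ M : Finset (Fin n), M.Nonempty →
        lam * ((2 : ℝ) ^ (∑ i ∈ M, r i) - 1) ≤ ∑ i ∈ M, z i}
      ≤ ENNReal.ofReal (Real.exp (-(lam * ((2 : ℝ) ^ (∑ i, r i) - 1)))
          * ∑ k ∈ Finset.range n,
              (lam * ((2 : ℝ) ^ (∑ i, r i) - 1 - ∑ i, ((2 : ℝ) ^ r i - 1))) ^ k
                / (Nat.factorial k)) := by
  classical
  haveI : IsProbabilityMeasure (expMeasure 1) := isProbabilityMeasure_expMeasure one_pos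
  haveI hne : Nonempty (Fin n) := ⟨⟨0, hn⟩⟩
  set a : Fin n → ℝ := fun i => lam * ((2:ℝ) ^ (r i) - 1) with ha_def
  have h2r : ∀ i, (1:ℝ) ≤ (2:ℝ) ^ (r i) := fun i => Real.one_le_rpow one_le_two (hr i)
  have ha : ∀ i, 0 ≤ a i := fun i => mul_nonneg hlam.le (by linarith [h2r i])
  have hsubset : {z : Fin n → ℝ | ∀ M : Finset (Fin n), M.Nonempty →
      lam * ((2 : ℝ) ^ (∑ i ∈ M, r i) - 1) ≤ ∑ i ∈ M, z i}
      ⊆ {z | (∀ i, a i ≤ z i) ∧ lam * ((2:ℝ) ^ (∑ i, r i) - 1) ≤ ∑ i, z i} := by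
    intro z hz
    refine ⟨fun i => ?_, ?_⟩
    · have h := hz {i} (Finset.singleton_nonempty i)
      simp only [Finset.sum_singleton] at h
      exact h
    · exact hz Finset.univ Finset.univ_nonempty
  refine le_trans (measure_mono hsubset) ?_
  rw [MacAux.G n hn a ha (lam * ((2:ℝ) ^ (∑ i, r i) - 1))]
  have hS : ∑ i, a i = lam * ∑ i, ((2:ℝ) ^ (r i) - 1) := by
    rw [ha_def, ← Finset.mul_sum]
  have hprod : (2:ℝ) ^ (∑ i, r i) = ∏ i, (2:ℝ) ^ (r i) :=
    Real.rpow_sum_of_pos two_pos r Finset.univ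
  have hkey : ∑ i, ((2:ℝ) ^ (r i) - 1) ≤ (2:ℝ) ^ (∑ i, r i) - 1 := by
    have h1 : 1 + ∑ i, ((2:ℝ) ^ (r i) - 1) ≤ ∏ i, (1 + ((2:ℝ) ^ (r i) - 1)) :=
      MacAux.one_add_sum_le_prod _ _ (fun i _ => by linarith [h2r i])
    have h2 : ∏ i, (1 + ((2:ℝ) ^ (r i) - 1)) = (2:ℝ) ^ (∑ i, r i) := by
      rw [hprod]
      exact Finset.prod_congr rfl fun i _ => by ring
    linarith [h1, h2.le]
  have hx0 : 0 ≤ lam * ((2:ℝ) ^ (∑ i, r i) - 1) - ∑ i, a i := by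
    rw [hS]
    nlinarith [hkey, hlam.le]
  rw [MacAux.Etail_of_nonneg hx0]
  apply le_of_eq
  congr 1
  rw [← mul_assoc, ← Real.exp_add]
  have e1 : -(∑ i, a i) + -(lam * ((2:ℝ) ^ (∑ i, r i) - 1) - ∑ i, a i)
      = -(lam * ((2:ℝ) ^ (∑ i, r i) - 1)) := by ring
  rw [e1]
  congr 1
  refine Finset.sum_congr rfl fun k _ => ?_
  congr 2
  rw [hS]
  ring
end
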